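/- arXiv:1110.1699 — 2 statements merged into one kernel-verified Lean document; each statement's English description precedes it below -/
import Mathlib

section
/- Let A be a finite dimensional positively graded algebra over a field such that A_0 is semisimple and A is generated by A_0 and A_1. If M is a finite dimensional graded A-module whose head M/rad M is irreducible, then the radical filtration of M coincides (up to shift) with the grading filtration Gr_d M = ⊕_{k ≥ d} M_k. Dually, if soc M is irreducible, the socle filtration coincides with the grading filtration. Consequently, M is rigid (radical and socle filtrations coincide) whenever both soc M and M/rad M are irreducible. -/
set_option linter.unusedSectionVars false

open Pointwise



/-- The radical of a module: the intersection of its maximal submodules. -/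
noncomputable def radM (A M : Type) [Ring A] [AddCommGroup M] [Module A M] :
    Submodule A M :=
  sInf {N : Submodule A M | IsCoatom N}

/-- The socle of a module: the sum of its simple submodules. -/
noncomputable def socM (A M : Type) [Ring A] [AddCommGroup M] [Module A M] :
    Submodule A M :=
  sSup {N : Submodule A M | IsAtom N}

/-- The radical filtration `M ⊇ rad M ⊇ rad² M ⊇ ⋯`. -/
noncomputable def radFilt (A M : Type) [Ring A] [AddCommGroup M] [Module A M] :
    ℕ → Submodule A M
  | 0 => ⊤
  | n + 1 => (radM A ↥(radFilt A M n)).map (radFilt A M n).subtype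

/-- The socle filtration `0 ⊆ soc M ⊆ soc² M ⊆ ⋯`, where `soc^{i+1} M` is the preimage
of `soc (M ⧸ soc^i M)`. -/
noncomputable def socFilt (A M : Type) [Ring A] [AddCommGroup M] [Module A M] :
    ℕ → Submodule A M
  | 0 => ⊥
  | n + 1 => (socM A (M ⧸ socFilt A M n)).comap (socFilt A M n).mkQ



section GradedVS
variable {K : Type} [Field K]
variable {V : Type} [AddCommGroup V] [Module K V] (𝒱 : ℤ → Submodule K V)

/-- The sum of the homogeneous pieces of degree `≥ t`. -/
def bgsG (t : ℤ) : Submodule K V := ⨆ (k : ℤ) (_ : t ≤ k), 𝒱 k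

lemma bgs_mem_G {t k : ℤ} (hk : t ≤ k) {x : V} (hx : x ∈ 𝒱 k) : x ∈ bgsG 𝒱 t :=
  (le_iSup₂ (f := fun (k : ℤ) (_ : t ≤ k) => 𝒱 k) k hk) hx

lemma bgsG_induction {t : ℤ} {p : V → Prop} {x : V} (hx : x ∈ bgsG 𝒱 t)
    (hom : ∀ k : ℤ, t ≤ k → ∀ y ∈ 𝒱 k, p y)
    (zero : p 0) (add : ∀ y z, p y → p z → p (y + z)) : p x := by
  rw [bgsG, iSup_subtype'] at hx
  exact Submodule.iSup_induction (motive := p) _ hx (fun i y hy => hom i.1 i.2 y hy) zero add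

lemma bgsG_antitone {t t' : ℤ} (h : t ≤ t') : bgsG 𝒱 t' ≤ bgsG 𝒱 t :=
  iSup₂_le fun k hk => le_iSup₂ (f := fun (k : ℤ) (_ : t ≤ k) => 𝒱 k) k (h.trans hk)

lemma bgsG_bot {t : ℤ} (ht : ∀ k, t ≤ k → 𝒱 k = ⊥) : bgsG 𝒱 t = ⊥ :=
  le_bot_iff.mp (iSup₂_le fun k hk => (ht k hk).le)

lemma bgsG_top (hV : DirectSum.IsInternal 𝒱) {s : ℤ} (hs : ∀ k, k < s → 𝒱 k = ⊥) :
    bgsG 𝒱 s = ⊤ := by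
  refine le_antisymm le_top ?_
  rw [← hV.submodule_iSup_eq_top]
  refine iSup_le fun k => ?_
  rcases lt_or_ge k s with h | h
  · rw [hs k h]; exact bot_le
  · exact le_iSup₂ (f := fun (k : ℤ) (_ : s ≤ k) => 𝒱 k) k h

lemma bgs_graded_cap (hV : DirectSum.IsInternal 𝒱) (B : ℤ → Submodule K V)
    (hB : ∀ e, B e ≤ 𝒱 e) {d : ℤ} {x : V} (hx : x ∈ 𝒱 d) (hx' : x ∈ ⨆ e, B e) :
    x ∈ B d := by
  classical
  letI := hV.chooseDecomposition
  have hproj : ∀ y, y ∈ ⨆ e, B e → ((DirectSum.decompose 𝒱 y) d : V) ∈ B d := by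
    intro y hy
    refine Submodule.iSup_induction
      (motive := fun y => ((DirectSum.decompose 𝒱 y) d : V) ∈ B d) _ hy ?_ ?_ ?_
    · intro e z hz
      by_cases he : e = d
      · subst he; rw [DirectSum.decompose_of_mem_same 𝒱 (hB e hz)]; exact hz
      · rw [DirectSum.decompose_of_mem_ne 𝒱 (hB e hz) he]; exact zero_mem _
    · show ((DirectSum.decompose 𝒱 (0:V)) d : V) ∈ B d
      rw [DirectSum.decompose_zero]; simp
    · intro y z hy hz
      rw [DirectSum.decompose_add, DirectSum.add_apply, Submodule.coe_add]
      exact add_mem hy hz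
  have h := hproj x hx'
  rwa [DirectSum.decompose_of_mem_same 𝒱 hx] at h

lemma bgs_finite_support (hV : DirectSum.IsInternal 𝒱) [FiniteDimensional K V] :
    {k : ℤ | 𝒱 k ≠ ⊥}.Finite := by
  haveI := (hV.submodule_iSupIndep).fintypeNeBotOfFiniteDimensional
  have : Finite {k : ℤ // 𝒱 k ≠ ⊥} := Finite.of_fintype _
  exact (Set.finite_coe_iff (s := {k : ℤ | 𝒱 k ≠ ⊥})).mp this
end GradedVS
section GradedAlg
variable {K A : Type} [Field K] [Ring A] [Algebra K A]
variable {𝒜 : ℤ → Submodule K A}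

lemma bgs_mulG (hmul : ∀ (d e : ℤ) (x : A), x ∈ 𝒜 d → ∀ y ∈ 𝒜 e, x * y ∈ 𝒜 (d + e))
    {r s : ℤ} {a b : A} (ha : a ∈ bgsG 𝒜 r) (hb : b ∈ bgsG 𝒜 s) :
    a * b ∈ bgsG 𝒜 (r + s) := by
  have aux : ∀ d : ℤ, r ≤ d → ∀ x ∈ 𝒜 d, ∀ y ∈ bgsG 𝒜 s, x * y ∈ bgsG 𝒜 (r + s) := by
    intro d hd x hx y hy
    refine bgsG_induction (p := fun y => x * y ∈ bgsG 𝒜 (r + s)) 𝒜 hy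
      (fun e he z hz => ?_) ?_ (fun z w hz hw => ?_)
    · exact bgs_mem_G 𝒜 (by omega) (hmul d e x hx z hz)
    · show x * (0 : A) ∈ _; rw [mul_zero]; exact zero_mem _
    · show x * (z + w) ∈ _; rw [mul_add]; exact add_mem hz hw
  refine bgsG_induction (p := fun a => a * b ∈ bgsG 𝒜 (r + s)) 𝒜 ha
    (fun d hd x hx => aux d hd x hx b hb) ?_ (fun x y hx hy => ?_)
  · show (0 : A) * b ∈ _; rw [zero_mul]; exact zero_mem _
  · show (x + y) * b ∈ _; rw [add_mul]; exact add_mem hx hy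

/-- The `B`-filtration: `B 0 = 𝒜 0`, `B (n+1) = 𝒜 1 * B n`. -/
def bgsB (𝒜 : ℤ → Submodule K A) : ℕ → Submodule K A
  | 0 => 𝒜 0
  | n + 1 => 𝒜 1 * bgsB 𝒜 n

section Blemmas
variable (hmul : ∀ (d e : ℤ) (x : A), x ∈ 𝒜 d → ∀ y ∈ 𝒜 e, x * y ∈ 𝒜 (d + e))
include hmul

lemma bgsB_le : ∀ n : ℕ, bgsB 𝒜 n ≤ 𝒜 (n : ℤ) := by
  intro n
  induction n with
  | zero => exact le_rfl
  | succ n ih =>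
    show 𝒜 1 * bgsB 𝒜 n ≤ _
    refine Submodule.mul_le.mpr fun x hx y hy => ?_
    have h := hmul 1 (n : ℤ) x hx y (ih hy)
    have hc : (1 + (n : ℤ)) = (((n + 1 : ℕ)) : ℤ) := by push_cast; ring
    rwa [hc] at h

lemma bgsA01 : 𝒜 0 * 𝒜 1 ≤ 𝒜 1 :=
  Submodule.mul_le.mpr fun x hx y hy => by simpa using hmul 0 1 x hx y hy

lemma bgsB_mul : ∀ m n : ℕ, bgsB 𝒜 m * bgsB 𝒜 n ≤ bgsB 𝒜 (m + n) := by
  intro m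
  induction m with
  | zero =>
    intro n
    rw [Nat.zero_add]
    cases n with
    | zero =>
      exact Submodule.mul_le.mpr fun x hx y hy => by simpa [bgsB] using hmul 0 0 x hx y hy
    | succ n =>
      show 𝒜 0 * (𝒜 1 * bgsB 𝒜 n) ≤ 𝒜 1 * bgsB 𝒜 n
      rw [← mul_assoc]
      exact mul_le_mul' (bgsA01 hmul) le_rfl
  | succ m ih =>
    intro n
    show 𝒜 1 * bgsB 𝒜 m * bgsB 𝒜 n ≤ bgsB 𝒜 (m + 1 + n)
    rw [mul_assoc]
    have h : m + 1 + n = (m + n) + 1 := by omega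
    rw [h]
    exact mul_le_mul' le_rfl (ih n)

lemma bgsB_sup_eq_top (h1 : (1 : A) ∈ 𝒜 0)
    (hgen : Algebra.adjoin K ((𝒜 0 : Set A) ∪ (𝒜 1 : Set A)) = ⊤) :
    (⨆ n : ℕ, bgsB 𝒜 n) = ⊤ := by
  set S := ⨆ n : ℕ, bgsB 𝒜 n with hS
  have h1S : (1 : A) ∈ S := (le_iSup (bgsB 𝒜) 0) h1
  have hmulS : ∀ x ∈ S, ∀ y ∈ S, x * y ∈ S := by
    intro x hx
    refine Submodule.iSup_induction (motive := fun x => ∀ y ∈ S, x * y ∈ S) _ hx ?_ ?_ ?_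
    · intro m x hxm y hy
      refine Submodule.iSup_induction (motive := fun y => x * y ∈ S) _ hy ?_ ?_ ?_
      · intro n z hz
        exact (le_iSup (bgsB 𝒜) (m + n)) (bgsB_mul hmul m n (Submodule.mul_mem_mul hxm hz))
      · show x * (0 : A) ∈ S; rw [mul_zero]; exact zero_mem _
      · intro z w hz hw; show x * (z + w) ∈ S; rw [mul_add]; exact add_mem hz hw
    · intro y hy; show (0 : A) * y ∈ S; rw [zero_mul]; exact zero_mem _
    · intro z w hz hw y hy; show (z + w) * y ∈ S; rw [add_mul]
      exact add_mem (hz y hy) (hw y hy)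
  have hsub : Algebra.adjoin K ((𝒜 0 : Set A) ∪ (𝒜 1 : Set A)) ≤
      S.toSubalgebra h1S (fun x y hx hy => hmulS x hx y hy) := by
    refine Algebra.adjoin_le ?_
    rintro x (hx | hx)
    · exact (le_iSup (bgsB 𝒜) 0) hx
    · have h2 : x * 1 ∈ bgsB 𝒜 1 := Submodule.mul_mem_mul hx h1
      rw [mul_one] at h2
      exact (le_iSup (bgsB 𝒜) 1) h2
  rw [hgen] at hsub
  exact le_antisymm le_top fun x _ => hsub (show x ∈ (⊤ : Subalgebra K A) from trivial)

lemma bgs_A_eq_B (hA : DirectSum.IsInternal 𝒜) (h1 : (1 : A) ∈ 𝒜 0)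
    (hgen : Algebra.adjoin K ((𝒜 0 : Set A) ∪ (𝒜 1 : Set A)) = ⊤) :
    ∀ n : ℕ, 𝒜 (n : ℤ) = bgsB 𝒜 n := by
  intro n
  refine le_antisymm ?_ (bgsB_le hmul n)
  intro x hx
  have hmem : x ∈ ⨆ e : ℤ, (if 0 ≤ e then bgsB 𝒜 e.toNat else ⊥) := by
    have htop : (⨆ n : ℕ, bgsB 𝒜 n) ≤ ⨆ e : ℤ, (if 0 ≤ e then bgsB 𝒜 e.toNat else ⊥) := by
      refine iSup_le fun m => ?_
      refine le_trans ?_ (le_iSup (fun e : ℤ => if 0 ≤ e then bgsB 𝒜 e.toNat else ⊥) (m : ℤ))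
      rw [if_pos (Int.natCast_nonneg m), Int.toNat_natCast]
    exact htop (by rw [bgsB_sup_eq_top hmul h1 hgen]; trivial)
  have hB : ∀ e : ℤ, (if 0 ≤ e then bgsB 𝒜 e.toNat else ⊥) ≤ 𝒜 e := by
    intro e
    by_cases he : 0 ≤ e
    · rw [if_pos he]
      exact le_trans (bgsB_le hmul e.toNat) (le_of_eq (by rw [Int.toNat_of_nonneg he]))
    · rw [if_neg he]; exact bot_le
  have h := bgs_graded_cap 𝒜 hA _ hB hx hmem
  rwa [if_pos (Int.natCast_nonneg n), Int.toNat_natCast] at h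

lemma bgs_A_succ_left (hA : DirectSum.IsInternal 𝒜) (h1 : (1 : A) ∈ 𝒜 0)
    (hgen : Algebra.adjoin K ((𝒜 0 : Set A) ∪ (𝒜 1 : Set A)) = ⊤) (n : ℕ) :
    𝒜 ((n : ℤ) + 1) = 𝒜 1 * 𝒜 (n : ℤ) := by
  have h1' : ((n : ℤ) + 1) = (((n + 1 : ℕ)) : ℤ) := by push_cast; ring
  rw [h1', bgs_A_eq_B hmul hA h1 hgen (n + 1), bgs_A_eq_B hmul hA h1 hgen n]
  rfl

lemma bgs_A_succ_right (hA : DirectSum.IsInternal 𝒜) (h1 : (1 : A) ∈ 𝒜 0)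
    (hgen : Algebra.adjoin K ((𝒜 0 : Set A) ∪ (𝒜 1 : Set A)) = ⊤) (n : ℕ) :
    𝒜 ((n : ℤ) + 1) = 𝒜 (n : ℤ) * 𝒜 1 := by
  induction n with
  | zero =>
    refine le_antisymm (fun x hx => ?_) (Submodule.mul_le.mpr fun x hx y hy => by
      simpa using hmul 0 1 x hx y hy)
    have h2 : (1 : A) * x ∈ 𝒜 0 * 𝒜 1 := Submodule.mul_mem_mul h1 (by simpa using hx)
    simpa using h2
  | succ n ih =>
    have e2 : (((n + 1 : ℕ)) : ℤ) = (n : ℤ) + 1 := by push_cast; ring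
    calc 𝒜 (((n + 1 : ℕ) : ℤ) + 1) = 𝒜 1 * 𝒜 ((n + 1 : ℕ) : ℤ) :=
          bgs_A_succ_left hmul hA h1 hgen (n + 1)
      _ = 𝒜 1 * (𝒜 (n : ℤ) * 𝒜 1) := by rw [e2, ih]
      _ = (𝒜 1 * 𝒜 (n : ℤ)) * 𝒜 1 := (mul_assoc _ _ _).symm
      _ = 𝒜 ((n : ℤ) + 1) * 𝒜 1 := by rw [← bgs_A_succ_left hmul hA h1 hgen n]
      _ = 𝒜 ((n + 1 : ℕ) : ℤ) * 𝒜 1 := by rw [← e2]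

lemma bgs_G_factor_right (hA : DirectSum.IsInternal 𝒜) (h1 : (1 : A) ∈ 𝒜 0)
    (hgen : Algebra.adjoin K ((𝒜 0 : Set A) ∪ (𝒜 1 : Set A)) = ⊤) (r : ℕ) :
    bgsG 𝒜 ((r : ℤ) + 1) ≤ bgsG 𝒜 (r : ℤ) * 𝒜 1 := by
  refine iSup₂_le fun d hd => ?_
  have hd0 : 0 ≤ d - 1 := by omega
  set n := (d - 1).toNat with hn
  have hdn : d = (n : ℤ) + 1 := by rw [hn, Int.toNat_of_nonneg hd0]; ring
  have hnr : (r : ℤ) ≤ (n : ℤ) := by omega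
  rw [hdn, bgs_A_succ_right hmul hA h1 hgen n]
  exact mul_le_mul' (fun x hx => bgs_mem_G 𝒜 hnr hx) le_rfl

end Blemmas
end GradedAlg
section Wmod
variable {K A : Type} [Field K] [Ring A] [Algebra K A]
variable {𝒜 : ℤ → Submodule K A}

lemma bgsG_zero_top (hA : DirectSum.IsInternal 𝒜) (hpos : ∀ d : ℤ, d < 0 → 𝒜 d = ⊥) :
    bgsG 𝒜 0 = ⊤ :=
  bgsG_top 𝒜 hA (fun k hk => hpos k hk)

lemma bgs_mul_right_mem (hmul : ∀ (d e : ℤ) (x : A), x ∈ 𝒜 d → ∀ y ∈ 𝒜 e, x * y ∈ 𝒜 (d + e))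
    (hA : DirectSum.IsInternal 𝒜) (hpos : ∀ d : ℤ, d < 0 → 𝒜 d = ⊥)
    {r : ℤ} {a : A} (ha : a ∈ bgsG 𝒜 r) (b : A) : a * b ∈ bgsG 𝒜 r := by
  have hb : b ∈ bgsG 𝒜 0 := by rw [bgsG_zero_top hA hpos]; trivial
  simpa using bgs_mulG hmul ha hb

lemma bgs_mul_left_mem (hmul : ∀ (d e : ℤ) (x : A), x ∈ 𝒜 d → ∀ y ∈ 𝒜 e, x * y ∈ 𝒜 (d + e))
    (hA : DirectSum.IsInternal 𝒜) (hpos : ∀ d : ℤ, d < 0 → 𝒜 d = ⊥)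
    {r : ℤ} {a : A} (ha : a ∈ bgsG 𝒜 r) (b : A) : b * a ∈ bgsG 𝒜 r := by
  have hb : b ∈ bgsG 𝒜 0 := by rw [bgsG_zero_top hA hpos]; trivial
  simpa using bgs_mulG hmul hb ha

lemma bgs_exists_nA (hA : DirectSum.IsInternal 𝒜) [FiniteDimensional K A] :
    ∃ n : ℕ, 1 ≤ n ∧ bgsG 𝒜 (n : ℤ) = ⊥ := by
  obtain ⟨b, hb⟩ := (bgs_finite_support 𝒜 hA).bddAbove
  refine ⟨max 1 (b + 1).toNat, le_max_left _ _, bgsG_bot _ fun k hk => ?_⟩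
  by_contra hne
  have h1 := hb (Set.mem_setOf.mpr hne)
  have h2 : ((max 1 (b + 1).toNat : ℕ) : ℤ) ≤ k := hk
  have h3 : ((b + 1).toNat : ℤ) ≤ ((max 1 (b + 1).toNat : ℕ) : ℤ) := by
    exact_mod_cast Nat.le_max_right 1 (b+1).toNat
  have h4 : b + 1 ≤ ((b + 1).toNat : ℤ) := Int.self_le_toNat _
  omega

variable {W : Type} [AddCommGroup W] [Module A W]

/-- `J^r N`: the `A`-submodule generated by elements `a • x` with `a` of degree `≥ r`
and `x ∈ N`. -/
def bgsJ (𝒜 : ℤ → Submodule K A) (r : ℕ) (N : Submodule A W) : Submodule A W :=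
  Submodule.span A {z : W | ∃ a ∈ bgsG 𝒜 (r : ℤ), ∃ x ∈ N, z = a • x}

lemma bgsJ_le (𝒜 : ℤ → Submodule K A) (r : ℕ) (N : Submodule A W) : bgsJ 𝒜 r N ≤ N := by
  refine Submodule.span_le.mpr ?_
  rintro z ⟨a, ha, x, hx, rfl⟩
  exact N.smul_mem a hx

lemma bgsJ_smul (hmul : ∀ (d e : ℤ) (x : A), x ∈ 𝒜 d → ∀ y ∈ 𝒜 e, x * y ∈ 𝒜 (d + e))
    (hA : DirectSum.IsInternal 𝒜) (hpos : ∀ d : ℤ, d < 0 → 𝒜 d = ⊥)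
    {r : ℕ} {N : Submodule A W} {y : W} (hy : y ∈ bgsJ 𝒜 r N)
    {a : A} (ha : a ∈ bgsG 𝒜 1) : a • y ∈ bgsJ 𝒜 (r + 1) N := by
  have key : ∀ (y : W) (_ : y ∈ bgsJ 𝒜 r N), ∀ b ∈ bgsG 𝒜 1, b • y ∈ bgsJ 𝒜 (r + 1) N := by
    intro y hy
    refine Submodule.span_induction
      (p := fun y _ => ∀ b ∈ bgsG 𝒜 1, b • y ∈ bgsJ 𝒜 (r + 1) N) ?_ ?_ ?_ ?_ hy
    · rintro z ⟨c, hc, x, hx, rfl⟩ b hb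
      rw [← mul_smul]
      refine Submodule.subset_span ⟨b * c, ?_, x, hx, rfl⟩
      have h := bgs_mulG hmul hb hc
      have hcast : (1 : ℤ) + (r : ℤ) = ((r + 1 : ℕ) : ℤ) := by push_cast; ring
      rwa [hcast] at h
    · intro b hb; rw [smul_zero]; exact zero_mem _
    · intro z w hz hw ihz ihw b hb; rw [smul_add]; exact add_mem (ihz b hb) (ihw b hb)
    · intro c z hz ih b hb
      rw [← mul_smul]
      exact ih (b * c) (bgs_mul_right_mem hmul hA hpos hb c)
  exact key y hy a ha

lemma bgsJ_bot {n : ℕ} (hn : bgsG 𝒜 (n : ℤ) = ⊥) (N : Submodule A W) :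
    bgsJ 𝒜 n N = ⊥ := by
  refine le_bot_iff.mp (Submodule.span_le.mpr ?_)
  rintro z ⟨a, ha, x, hx, rfl⟩
  rw [hn] at ha
  simp only [Submodule.mem_bot] at ha
  simp [ha]

lemma bgsJ_iterate (hmul : ∀ (d e : ℤ) (x : A), x ∈ 𝒜 d → ∀ y ∈ 𝒜 e, x * y ∈ 𝒜 (d + e))
    (hA : DirectSum.IsInternal 𝒜) (hpos : ∀ d : ℤ, d < 0 → 𝒜 d = ⊥)
    {N : Submodule A W} (h : bgsJ 𝒜 1 N = N) : ∀ r : ℕ, 1 ≤ r → bgsJ 𝒜 r N = N := by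
  intro r hr
  induction r with
  | zero => omega
  | succ r ih =>
    rcases Nat.eq_or_lt_of_le hr with h1 | h1
    · rw [show r + 1 = 1 by omega]; exact h
    have hih : bgsJ 𝒜 r N = N := ih (by omega)
    refine le_antisymm (bgsJ_le 𝒜 _ N) ?_
    conv_lhs => rw [← h]
    refine Submodule.span_le.mpr ?_
    rintro z ⟨a, ha, x, hx, rfl⟩
    have hx' : x ∈ bgsJ 𝒜 r N := by rw [hih]; exact hx
    exact bgsJ_smul hmul hA hpos hx' ha

/-- `Ann_r`: elements annihilated by everything of degree `≥ r`. -/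
def bgsAnn (𝒜 : ℤ → Submodule K A)
    (hmul : ∀ (d e : ℤ) (x : A), x ∈ 𝒜 d → ∀ y ∈ 𝒜 e, x * y ∈ 𝒜 (d + e))
    (hA : DirectSum.IsInternal 𝒜) (hpos : ∀ d : ℤ, d < 0 → 𝒜 d = ⊥)
    (r : ℕ) (W : Type) [AddCommGroup W] [Module A W] : Submodule A W where
  carrier := {x : W | ∀ a ∈ bgsG 𝒜 (r : ℤ), a • x = 0}
  zero_mem' := fun a _ => smul_zero a
  add_mem' := fun hx hy a ha => by
    rw [smul_add, hx a ha, hy a ha, add_zero]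
  smul_mem' := fun b x hx a ha => by
    rw [← mul_smul]
    exact hx (a * b) (bgs_mul_right_mem hmul hA hpos ha b)

end Wmod
section SemiSimp
variable {K A : Type} [Field K] [Ring A] [Algebra K A]
variable {𝒜 : ℤ → Submodule K A}

lemma bgs_pi0 (hA : DirectSum.IsInternal 𝒜) (hpos : ∀ d : ℤ, d < 0 → 𝒜 d = ⊥) (a : A) :
    ∃ a0 ∈ 𝒜 0, a - a0 ∈ bgsG 𝒜 1 := by
  classical
  letI := hA.chooseDecomposition
  refine ⟨(DirectSum.decompose 𝒜 a 0 : A), SetLike.coe_mem _, ?_⟩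
  have hsum : (∑ d ∈ (DirectSum.decompose 𝒜 a).support, (DirectSum.decompose 𝒜 a d : A)) = a :=
    DirectSum.sum_support_decompose 𝒜 a
  have hterm : ∀ d ∈ (DirectSum.decompose 𝒜 a).support, d ≠ 0 →
      (DirectSum.decompose 𝒜 a d : A) ∈ bgsG 𝒜 1 := by
    intro d _ hd0
    rcases lt_or_ge d 0 with hneg | hge
    · have hm : (DirectSum.decompose 𝒜 a d : A) = 0 := by
        have hm2 : (DirectSum.decompose 𝒜 a d : A) ∈ (⊥ : Submodule K A) := by
          rw [← hpos d hneg]; exact SetLike.coe_mem _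
        exact Submodule.mem_bot K |>.mp hm2
      rw [hm]; exact zero_mem _
    · exact bgs_mem_G 𝒜 (by omega) (SetLike.coe_mem _)
  by_cases h0 : (0 : ℤ) ∈ (DirectSum.decompose 𝒜 a).support
  · have heq : a - (DirectSum.decompose 𝒜 a 0 : A) =
        ∑ d ∈ (DirectSum.decompose 𝒜 a).support.erase 0, (DirectSum.decompose 𝒜 a d : A) := by
      rw [Finset.sum_erase_eq_sub h0, hsum]
    rw [heq]
    exact Submodule.sum_mem _ fun d hd =>
      hterm d (Finset.mem_of_mem_erase hd) (Finset.ne_of_mem_erase hd)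
  · have h00 : (DirectSum.decompose 𝒜 a 0 : A) = 0 := by
      rw [DFinsupp.notMem_support_iff.mp h0]; rfl
    rw [h00, sub_zero, ← hsum]
    exact Submodule.sum_mem _ fun d hd => hterm d hd (fun hd0 => h0 (hd0 ▸ hd))

lemma bgs_semisimple (h1 : (1 : A) ∈ 𝒜 0)
    (hmul : ∀ (d e : ℤ) (x : A), x ∈ 𝒜 d → ∀ y ∈ 𝒜 e, x * y ∈ 𝒜 (d + e))
    (hA : DirectSum.IsInternal 𝒜) (hpos : ∀ d : ℤ, d < 0 → 𝒜 d = ⊥)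
    (hss : IsSemisimpleRing
      ↥((𝒜 0).toSubalgebra h1 (fun x y hx hy => by simpa using hmul 0 0 x hx y hy)))
    (W : Type) [AddCommGroup W] [Module A W]
    (hW : ∀ a ∈ bgsG 𝒜 1, ∀ x : W, a • x = 0) : IsSemisimpleModule A W := by
  set A0 : Subalgebra K A :=
    (𝒜 0).toSubalgebra h1 (fun x y hx hy => by simpa using hmul 0 0 x hx y hy) with hA0def
  letI : Module ↥A0 W := Module.compHom W (A0.val.toRingHom : ↥A0 →+* A)
  haveI : IsSemisimpleRing ↥A0 := hss
  haveI hssW : IsSemisimpleModule ↥A0 W := inferInstance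
  let e : Submodule ↥A0 W ≃o Submodule A W :=
    { toFun := fun P =>
        { carrier := ↑P
          add_mem' := fun ha hb => P.add_mem ha hb
          zero_mem' := P.zero_mem
          smul_mem' := fun a x hx => by
            obtain ⟨a0, ha0, hsub⟩ := bgs_pi0 hA hpos a
            have hax : a • x = a0 • x := by
              have h2 : (a - a0) • x = 0 := hW _ hsub x
              rw [sub_smul, sub_eq_zero] at h2
              exact h2
            rw [hax]
            exact P.smul_mem (⟨a0, ha0⟩ : ↥A0) hx }
      invFun := fun Q =>
        { carrier := ↑Q
          add_mem' := fun ha hb => Q.add_mem ha hb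
          zero_mem' := Q.zero_mem
          smul_mem' := fun a0 x hx => Q.smul_mem (a0 : A) hx }
      left_inv := fun P => SetLike.coe_injective rfl
      right_inv := fun Q => SetLike.coe_injective rfl
      map_rel_iff' := Iff.rfl }
  exact (isSemisimpleModule_iff A W).mpr e.complementedLattice

lemma bgs_rad_bot (R W : Type) [Ring R] [AddCommGroup W] [Module R W]
    [IsSemisimpleModule R W] : radM R W = ⊥ := by
  rcases eq_bot_or_exists_atom_le (radM R W) with h | ⟨a, ha, hle⟩
  · exact h
  · obtain ⟨b, hb⟩ := exists_isCompl a
    have hco : IsCoatom b := hb.isAtom_iff_isCoatom.mp ha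
    have h2 : radM R W ≤ b := sInf_le hco
    exact absurd (hb.disjoint.eq_bot_of_le (hle.trans h2)) ha.1

lemma bgs_soc_top (R W : Type) [Ring R] [AddCommGroup W] [Module R W]
    [IsSemisimpleModule R W] : socM R W = ⊤ := by
  have h := IsSemisimpleModule.sSup_simples_eq_top R W
  rw [socM, ← h]
  congr 1
  ext m
  exact (isSimpleModule_iff_isAtom).symm

lemma bgs_comap_coatom {R W : Type} [Ring R] [AddCommGroup W] [Module R W]
    (p : Submodule R W) {Qc : Submodule R (W ⧸ p)} (h : IsCoatom Qc) :
    IsCoatom (Qc.comap p.mkQ) := by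
  have hker : p ≤ Qc.comap p.mkQ := by
    intro x hx
    show p.mkQ x ∈ Qc
    have hz : p.mkQ x = 0 := by
      rw [Submodule.mkQ_apply, Submodule.Quotient.mk_eq_zero]; exact hx
    rw [hz]; exact Qc.zero_mem
  constructor
  · intro heq
    have h3 := congrArg (Submodule.map p.mkQ) heq
    rw [Submodule.map_comap_eq_of_surjective p.mkQ_surjective, Submodule.map_top,
      Submodule.range_mkQ] at h3
    exact h.1 h3
  · intro P' hP'
    have hcm : Submodule.comap p.mkQ (Submodule.map p.mkQ P') = P' := by
      rw [Submodule.comap_map_eq, Submodule.ker_mkQ]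
      exact sup_eq_left.mpr (le_trans hker hP'.le)
    have hmap : Qc ≤ Submodule.map p.mkQ P' := by
      conv_lhs => rw [← Submodule.map_comap_eq_of_surjective p.mkQ_surjective Qc]
      exact Submodule.map_mono hP'.le
    have hne : Qc ≠ Submodule.map p.mkQ P' := by
      intro heq
      rw [← heq] at hcm
      exact (ne_of_lt hP') hcm
    have h5 : Submodule.map p.mkQ P' = ⊤ := h.2 _ (lt_of_le_of_ne hmap hne)
    rw [h5, Submodule.comap_top] at hcm
    exact hcm.symm

variable [FiniteDimensional K A]

lemma bgs_radM_eq (h1 : (1 : A) ∈ 𝒜 0)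
    (hmul : ∀ (d e : ℤ) (x : A), x ∈ 𝒜 d → ∀ y ∈ 𝒜 e, x * y ∈ 𝒜 (d + e))
    (hA : DirectSum.IsInternal 𝒜) (hpos : ∀ d : ℤ, d < 0 → 𝒜 d = ⊥)
    (hss : IsSemisimpleRing
      ↥((𝒜 0).toSubalgebra h1 (fun x y hx hy => by simpa using hmul 0 0 x hx y hy)))
    (W : Type) [AddCommGroup W] [Module A W] :
    radM A W = bgsJ 𝒜 1 (⊤ : Submodule A W) := by
  obtain ⟨nA, hnA1, hnA⟩ := bgs_exists_nA hA
  refine le_antisymm ?_ (le_sInf fun P hP => ?_)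
  · -- radM ≤ J
    set p := bgsJ 𝒜 1 (⊤ : Submodule A W) with hp
    have hannQ : ∀ a ∈ bgsG 𝒜 1, ∀ y : W ⧸ p, a • y = 0 := by
      intro a ha y
      obtain ⟨x, rfl⟩ := Submodule.Quotient.mk_surjective p y
      have hmem : a • x ∈ p := Submodule.subset_span ⟨a, ha, x, trivial, rfl⟩
      rw [← Submodule.Quotient.mk_smul, Submodule.Quotient.mk_eq_zero]
      exact hmem
    haveI hssQ : IsSemisimpleModule A (W ⧸ p) :=
      bgs_semisimple h1 hmul hA hpos hss (W ⧸ p) hannQ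
    have hrQ : radM A (W ⧸ p) = ⊥ := bgs_rad_bot A (W ⧸ p)
    intro x hx
    have hmk : p.mkQ x ∈ radM A (W ⧸ p) := by
      rw [radM, Submodule.mem_sInf]
      intro Qc hQc
      exact (Submodule.mem_sInf.mp hx) _ (bgs_comap_coatom p hQc)
    rw [hrQ, Submodule.mem_bot, Submodule.mkQ_apply, Submodule.Quotient.mk_eq_zero] at hmk
    exact hmk
  · -- J ≤ every coatom
    haveI hsimple : IsSimpleModule A (W ⧸ P) := isSimpleModule_iff_isCoatom.mpr hP
    refine Submodule.span_le.mpr ?_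
    rintro z ⟨a, ha, x, -, rfl⟩
    rcases eq_bot_or_eq_top (bgsJ 𝒜 1 (⊤ : Submodule A (W ⧸ P))) with hb | ht
    · have hmem : P.mkQ (a • x) ∈ bgsJ 𝒜 1 (⊤ : Submodule A (W ⧸ P)) :=
        Submodule.subset_span ⟨a, ha, P.mkQ x, trivial, by rw [map_smul]⟩
      rw [hb, Submodule.mem_bot, Submodule.mkQ_apply, Submodule.Quotient.mk_eq_zero] at hmem
      exact hmem
    · exfalso
      have h2 := bgsJ_iterate hmul hA hpos (N := (⊤ : Submodule A (W ⧸ P))) ht nA hnA1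
      rw [bgsJ_bot hnA ⊤] at h2
      exact bot_ne_top h2

lemma bgs_socM_eq (h1 : (1 : A) ∈ 𝒜 0)
    (hmul : ∀ (d e : ℤ) (x : A), x ∈ 𝒜 d → ∀ y ∈ 𝒜 e, x * y ∈ 𝒜 (d + e))
    (hA : DirectSum.IsInternal 𝒜) (hpos : ∀ d : ℤ, d < 0 → 𝒜 d = ⊥)
    (hss : IsSemisimpleRing
      ↥((𝒜 0).toSubalgebra h1 (fun x y hx hy => by simpa using hmul 0 0 x hx y hy)))
    (W : Type) [AddCommGroup W] [Module A W] :
    socM A W = bgsAnn 𝒜 hmul hA hpos 1 W := by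
  obtain ⟨nA, hnA1, hnA⟩ := bgs_exists_nA hA
  refine le_antisymm (sSup_le fun S hS => ?_) ?_
  · by_cases heq : bgsJ 𝒜 1 S = S
    · exfalso
      have h2 := bgsJ_iterate hmul hA hpos heq nA hnA1
      rw [bgsJ_bot hnA S] at h2
      exact hS.1 h2.symm
    · have hbot : bgsJ 𝒜 1 S = ⊥ := by
        rcases (IsAtom.le_iff hS).mp (bgsJ_le 𝒜 1 S) with hb | hb
        · exact hb
        · exact absurd hb heq
      intro x hxS
      intro a ha
      have hmem : a • x ∈ bgsJ 𝒜 1 S := Submodule.subset_span ⟨a, ha, x, hxS, rfl⟩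
      rw [hbot, Submodule.mem_bot] at hmem
      exact hmem
  · set Ann1 := bgsAnn 𝒜 hmul hA hpos 1 W with hAnn1
    have hannW' : ∀ a ∈ bgsG 𝒜 1, ∀ y : ↥Ann1, a • y = 0 := by
      intro a ha y
      apply Subtype.ext
      rw [Submodule.coe_smul]
      exact y.2 a ha
    haveI := bgs_semisimple h1 hmul hA hpos hss ↥Ann1 hannW'
    have htop : socM A ↥Ann1 = ⊤ := bgs_soc_top A ↥Ann1
    calc Ann1 = Submodule.map Ann1.subtype ⊤ := (Submodule.map_subtype_top Ann1).symm
      _ = Submodule.map Ann1.subtype (socM A ↥Ann1) := by rw [htop]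
      _ ≤ socM A W := by
        rw [socM, (Submodule.gc_map_comap Ann1.subtype).l_sSup]
        refine iSup₂_le fun N hN => ?_
        refine le_sSup ?_
        haveI : IsSimpleModule A ↥N := isSimpleModule_iff_isAtom.mpr hN
        have hsimp : IsSimpleModule A ↥(Submodule.map Ann1.subtype N) :=
          IsSimpleModule.congr (Submodule.equivMapOfInjective Ann1.subtype
            Ann1.injective_subtype N).symm
        exact isSimpleModule_iff_isAtom.mp hsimp
end SemiSimp
section Filt
variable {K A : Type} [Field K] [Ring A] [Algebra K A] [FiniteDimensional K A]
variable {𝒜 : ℤ → Submodule K A}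
variable {M : Type} [AddCommGroup M] [Module K M] [Module A M] [IsScalarTower K A M]
variable {ℳ : ℤ → Submodule K M}

lemma bgs_smulG_mem (hMs : ∀ (d e : ℤ) (a : A), a ∈ 𝒜 d → ∀ x ∈ ℳ e, a • x ∈ ℳ (d + e))
    {r t : ℤ} {a : A} {x : M} (ha : a ∈ bgsG 𝒜 r) (hx : x ∈ bgsG ℳ t) :
    a • x ∈ bgsG ℳ (r + t) := by
  have aux : ∀ d : ℤ, r ≤ d → ∀ b ∈ 𝒜 d, ∀ y ∈ bgsG ℳ t, b • y ∈ bgsG ℳ (r + t) := by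
    intro d hd b hb y hy
    refine bgsG_induction (p := fun y => b • y ∈ bgsG ℳ (r + t)) ℳ hy
      (fun e he z hz => ?_) ?_ (fun z w hz hw => ?_)
    · exact bgs_mem_G ℳ (by omega) (hMs d e b hb z hz)
    · show b • (0 : M) ∈ _; rw [smul_zero]; exact zero_mem _
    · show b • (z + w) ∈ _; rw [smul_add]; exact add_mem hz hw
  refine bgsG_induction (p := fun a => a • x ∈ bgsG ℳ (r + t)) 𝒜 ha
    (fun d hd b hb => aux d hd b hb x hx) ?_ (fun b c hb hc => ?_)
  · show (0 : A) • x ∈ _; rw [zero_smul]; exact zero_mem _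
  · show (b + c) • x ∈ _; rw [add_smul]; exact add_mem hb hc

variable [FiniteDimensional K M]

lemma bgs_radFilt_succ (h1 : (1 : A) ∈ 𝒜 0)
    (hmul : ∀ (d e : ℤ) (x : A), x ∈ 𝒜 d → ∀ y ∈ 𝒜 e, x * y ∈ 𝒜 (d + e))
    (hA : DirectSum.IsInternal 𝒜) (hpos : ∀ d : ℤ, d < 0 → 𝒜 d = ⊥)
    (hss : IsSemisimpleRing
      ↥((𝒜 0).toSubalgebra h1 (fun x y hx hy => by simpa using hmul 0 0 x hx y hy)))
    (n : ℕ) :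
    radFilt A M (n + 1) = bgsJ 𝒜 1 (radFilt A M n) := by
  set N := radFilt A M n with hN
  haveI : FiniteDimensional K ↥N :=
    inferInstanceAs (FiniteDimensional K ↥(N.restrictScalars K))
  have hrad : radM A ↥N = bgsJ 𝒜 1 (⊤ : Submodule A ↥N) :=
    bgs_radM_eq h1 hmul hA hpos hss ↥N
  show (radM A ↥N).map N.subtype = _
  rw [hrad, bgsJ, Submodule.map_span]
  congr 1
  ext z
  constructor
  · rintro ⟨w, ⟨a, ha, x, -, rfl⟩, rfl⟩
    exact ⟨a, ha, ↑x, x.2, by simp⟩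
  · rintro ⟨a, ha, x, hx, rfl⟩
    exact ⟨a • (⟨x, hx⟩ : ↥N), ⟨a, ha, ⟨x, hx⟩, trivial, rfl⟩, by simp⟩

lemma bgs_socFilt_eq (h1 : (1 : A) ∈ 𝒜 0)
    (hmul : ∀ (d e : ℤ) (x : A), x ∈ 𝒜 d → ∀ y ∈ 𝒜 e, x * y ∈ 𝒜 (d + e))
    (hA : DirectSum.IsInternal 𝒜) (hpos : ∀ d : ℤ, d < 0 → 𝒜 d = ⊥)
    (hss : IsSemisimpleRing
      ↥((𝒜 0).toSubalgebra h1 (fun x y hx hy => by simpa using hmul 0 0 x hx y hy)))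
    (hgen : Algebra.adjoin K ((𝒜 0 : Set A) ∪ (𝒜 1 : Set A)) = ⊤) :
    ∀ r : ℕ, socFilt A M r = bgsAnn 𝒜 hmul hA hpos r M := by
  intro r
  induction r with
  | zero =>
    refine le_antisymm bot_le ?_
    intro x hx
    have h2 : (1 : A) • x = 0 := hx 1 (by
      simp only [Nat.cast_zero, bgsG_zero_top hA hpos]; trivial)
    rw [one_smul] at h2
    show x ∈ (⊥ : Submodule A M)
    simp [h2]
  | succ n ih =>
    show (socM A (M ⧸ socFilt A M n)).comap (socFilt A M n).mkQ = _
    set p := socFilt A M n with hp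
    haveI : FiniteDimensional K (M ⧸ p) :=
      Module.Finite.of_surjective ((p.mkQ).restrictScalars K) p.mkQ_surjective
    rw [bgs_socM_eq h1 hmul hA hpos hss (M ⧸ p)]
    ext x
    simp only [Submodule.mem_comap]
    constructor
    · intro hx c hc
      have hc' : c ∈ bgsG 𝒜 ((n : ℤ) + 1) := by
        have hcast : (((n + 1 : ℕ)) : ℤ) = (n : ℤ) + 1 := by push_cast; ring
        rwa [hcast] at hc
      have hc2 : c ∈ bgsG 𝒜 (n : ℤ) * 𝒜 1 := bgs_G_factor_right hmul hA h1 hgen n hc'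
      have key : ∀ a ∈ bgsG 𝒜 1, ∀ b ∈ bgsG 𝒜 (n : ℤ), b • (a • x) = 0 := by
        intro a ha b hb
        have h3 : a • p.mkQ x = 0 := hx a ha
        rw [← map_smul, Submodule.mkQ_apply, Submodule.Quotient.mk_eq_zero] at h3
        have h4 : a • x ∈ bgsAnn 𝒜 hmul hA hpos n M := ih ▸ h3
        exact h4 b hb
      refine Submodule.mul_induction_on hc2 (fun b hb a ha => ?_) (fun c1 c2 h1' h2' => ?_)
      · rw [mul_smul]
        exact key a (bgs_mem_G 𝒜 le_rfl ha) b hb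
      · rw [add_smul, h1', h2', add_zero]
    · intro hx a ha
      have h3 : a • x ∈ p := by
        rw [ih]
        intro b hb
        rw [← mul_smul]
        have hba : b * a ∈ bgsG 𝒜 ((n : ℤ) + 1) := bgs_mulG hmul hb ha
        have hcast : (((n + 1 : ℕ)) : ℤ) = (n : ℤ) + 1 := by push_cast; ring
        exact hx (b * a) (by rwa [hcast])
      calc a • p.mkQ x = p.mkQ (a • x) := (map_smul p.mkQ a x).symm
        _ = 0 := by rw [Submodule.mkQ_apply, Submodule.Quotient.mk_eq_zero]; exact h3
end Filt
section PartA
variable {K A : Type} [Field K] [Ring A] [Algebra K A] [FiniteDimensional K A]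
variable {𝒜 : ℤ → Submodule K A}
variable {M : Type} [AddCommGroup M] [Module K M] [Module A M] [IsScalarTower K A M]
variable {ℳ : ℤ → Submodule K M}

/-- `C 0 = ℳ s`, `C (j+1) = 𝒜 1 • C j`. -/
def bgsC (𝒜 : ℤ → Submodule K A) (ℳ : ℤ → Submodule K M) (s : ℤ) : ℕ → Submodule K M
  | 0 => ℳ s
  | j + 1 => Submodule.span K ((𝒜 1 : Set A) • (bgsC 𝒜 ℳ s j : Set M))

lemma bgsC_le (hMs : ∀ (d e : ℤ) (a : A), a ∈ 𝒜 d → ∀ x ∈ ℳ e, a • x ∈ ℳ (d + e))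
    (s : ℤ) : ∀ j : ℕ, bgsC 𝒜 ℳ s j ≤ ℳ (s + j) := by
  intro j
  induction j with
  | zero => simp [bgsC]
  | succ j ih =>
    show Submodule.span K _ ≤ _
    refine Submodule.span_le.mpr ?_
    rintro z ⟨a, ha, y, hy, rfl⟩
    have h := hMs 1 (s + j) a ha y (ih hy)
    have hc : (1 : ℤ) + (s + j) = s + ((j + 1 : ℕ) : ℤ) := by push_cast; ring
    rwa [hc] at h

lemma bgsC_smul (h1 : (1 : A) ∈ 𝒜 0)
    (hmul : ∀ (d e : ℤ) (x : A), x ∈ 𝒜 d → ∀ y ∈ 𝒜 e, x * y ∈ 𝒜 (d + e))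
    (hA : DirectSum.IsInternal 𝒜)
    (hgen : Algebra.adjoin K ((𝒜 0 : Set A) ∪ (𝒜 1 : Set A)) = ⊤)
    (hMs : ∀ (d e : ℤ) (a : A), a ∈ 𝒜 d → ∀ x ∈ ℳ e, a • x ∈ ℳ (d + e)) (s : ℤ) :
    ∀ (n : ℕ) (a : A), a ∈ 𝒜 (n : ℤ) → ∀ (j : ℕ), ∀ x ∈ bgsC 𝒜 ℳ s j,
      a • x ∈ bgsC 𝒜 ℳ s (j + n) := by
  intro n
  induction n with
  | zero =>
    intro a ha j
    induction j with
    | zero =>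
      intro x hx
      have h := hMs 0 s a (by simpa using ha) x hx
      simpa [bgsC] using h
    | succ j ih =>
      intro x hx
      refine Submodule.span_induction (p := fun y _ => a • y ∈ bgsC 𝒜 ℳ s (j + 1 + 0))
        ?_ ?_ ?_ ?_ hx
      · rintro z ⟨b, hb, y, hy, rfl⟩
        rw [← mul_smul]
        have hab : a * b ∈ 𝒜 1 := by simpa using hmul 0 1 a (by simpa using ha) b hb
        exact Submodule.subset_span ⟨a * b, hab, y, hy, rfl⟩
      · show a • (0 : M) ∈ _; rw [smul_zero]; exact zero_mem _
      · intro y z _ _ hy hz; show a • (y + z) ∈ _; rw [smul_add]; exact add_mem hy hz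
      · intro c y _ hy
        show a • (c • y) ∈ _
        rw [smul_comm]
        exact Submodule.smul_mem _ c hy
  | succ n ih =>
    intro a ha j x hx
    have hcast : (((n + 1 : ℕ)) : ℤ) = (n : ℤ) + 1 := by push_cast; ring
    have ha' : a ∈ 𝒜 1 * 𝒜 (n : ℤ) := by
      rw [← bgs_A_succ_left hmul hA h1 hgen n, ← hcast]; exact ha
    have key : ∀ c ∈ 𝒜 1 * 𝒜 (n : ℤ), c • x ∈ bgsC 𝒜 ℳ s (j + (n + 1)) := by
      intro c hc
      refine Submodule.mul_induction_on hc (fun b hb d hd => ?_) (fun c1 c2 hc1 hc2 => ?_)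
      · rw [mul_smul]
        have hdx : d • x ∈ bgsC 𝒜 ℳ s (j + n) := ih d hd j x hx
        have : b • (d • x) ∈ bgsC 𝒜 ℳ s ((j + n) + 1) :=
          Submodule.subset_span ⟨b, hb, d • x, hdx, rfl⟩
        rwa [show (j + n) + 1 = j + (n + 1) by omega] at this
      · rw [add_smul]; exact add_mem hc1 hc2
    exact key a ha'

lemma bgsC_sup (h1 : (1 : A) ∈ 𝒜 0)
    (hmul : ∀ (d e : ℤ) (x : A), x ∈ 𝒜 d → ∀ y ∈ 𝒜 e, x * y ∈ 𝒜 (d + e))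
    (hA : DirectSum.IsInternal 𝒜) (hpos : ∀ d : ℤ, d < 0 → 𝒜 d = ⊥)
    (hgen : Algebra.adjoin K ((𝒜 0 : Set A) ∪ (𝒜 1 : Set A)) = ⊤)
    (hMs : ∀ (d e : ℤ) (a : A), a ∈ 𝒜 d → ∀ x ∈ ℳ e, a • x ∈ ℳ (d + e)) (s : ℤ)
    (hE : Submodule.span A ((ℳ s : Set M)) = ⊤) :
    (⨆ j : ℕ, bgsC 𝒜 ℳ s j) = ⊤ := by
  set DM := ⨆ j : ℕ, bgsC 𝒜 ℳ s j with hDM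
  have hstab : ∀ (a : A), ∀ x ∈ DM, a • x ∈ DM := by
    intro a x hx
    refine Submodule.iSup_induction (motive := fun x => ∀ b : A, b • x ∈ DM) _ hx ?_ ?_ ?_ a
    · intro j z hz b
      have hb : b ∈ bgsG 𝒜 0 := by rw [bgsG_zero_top hA hpos]; trivial
      refine bgsG_induction (p := fun b => b • z ∈ DM) 𝒜 hb (fun d hd y hy => ?_) ?_ ?_
      · set n := d.toNat with hn
        have hdn : d = (n : ℤ) := by rw [hn, Int.toNat_of_nonneg hd]
        rw [hdn] at hy
        exact (le_iSup (bgsC 𝒜 ℳ s) (j + n)) (bgsC_smul h1 hmul hA hgen hMs s n y hy j z hz)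
      · show (0 : A) • z ∈ DM; rw [zero_smul]; exact zero_mem _
      · intro y w hy hw; show (y + w) • z ∈ DM; rw [add_smul]; exact add_mem hy hw
    · intro b; rw [smul_zero]; exact zero_mem _
    · intro y z hy hz b; rw [smul_add]; exact add_mem (hy b) (hz b)
  let DMA : Submodule A M :=
    { carrier := ↑DM
      add_mem' := fun ha hb => DM.add_mem ha hb
      zero_mem' := DM.zero_mem
      smul_mem' := fun a x hx => hstab a x hx }
  have hle : Submodule.span A ((ℳ s : Set M)) ≤ DMA :=
    Submodule.span_le.mpr (fun x hx => (le_iSup (bgsC 𝒜 ℳ s) 0) hx)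
  rw [hE] at hle
  exact le_antisymm le_top (fun x _ => hle trivial)

lemma bgsC_eq (h1 : (1 : A) ∈ 𝒜 0)
    (hmul : ∀ (d e : ℤ) (x : A), x ∈ 𝒜 d → ∀ y ∈ 𝒜 e, x * y ∈ 𝒜 (d + e))
    (hA : DirectSum.IsInternal 𝒜) (hpos : ∀ d : ℤ, d < 0 → 𝒜 d = ⊥)
    (hgen : Algebra.adjoin K ((𝒜 0 : Set A) ∪ (𝒜 1 : Set A)) = ⊤)
    (hM : DirectSum.IsInternal ℳ)
    (hMs : ∀ (d e : ℤ) (a : A), a ∈ 𝒜 d → ∀ x ∈ ℳ e, a • x ∈ ℳ (d + e)) (s : ℤ)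
    (hE : Submodule.span A ((ℳ s : Set M)) = ⊤) :
    ∀ j : ℕ, ℳ (s + j) = bgsC 𝒜 ℳ s j := by
  intro j
  refine le_antisymm ?_ (bgsC_le hMs s j)
  intro x hx
  have hB : ∀ k : ℤ, (if h : s ≤ k then bgsC 𝒜 ℳ s (k - s).toNat else ⊥) ≤ ℳ k := by
    intro k
    by_cases hk : s ≤ k
    · rw [dif_pos hk]
      refine le_trans (bgsC_le hMs s _) (le_of_eq ?_)
      congr 1
      rw [Int.toNat_of_nonneg (by omega)]; ring
    · rw [dif_neg hk]; exact bot_le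
  have hmem : x ∈ ⨆ k : ℤ, (if h : s ≤ k then bgsC 𝒜 ℳ s (k - s).toNat else ⊥) := by
    have htop : (⨆ j : ℕ, bgsC 𝒜 ℳ s j) ≤
        ⨆ k : ℤ, (if h : s ≤ k then bgsC 𝒜 ℳ s (k - s).toNat else ⊥) := by
      refine iSup_le fun j => ?_
      refine le_trans ?_ (le_iSup _ (s + (j : ℤ)))
      rw [dif_pos (by omega : s ≤ s + (j : ℤ))]
      refine le_of_eq ?_
      congr 1
      omega
    exact htop (by rw [bgsC_sup h1 hmul hA hpos hgen hMs s hE]; trivial)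
  have h := bgs_graded_cap ℳ hM _ hB hx hmem
  rw [dif_pos (by omega : s ≤ s + (j : ℤ))] at h
  have : (s + (j : ℤ) - s).toNat = j := by omega
  rwa [this] at h
end PartA
section PartA2
variable {K A : Type} [Field K] [Ring A] [Algebra K A] [FiniteDimensional K A]
variable {𝒜 : ℤ → Submodule K A}
variable {M : Type} [AddCommGroup M] [Module K M] [Module A M] [IsScalarTower K A M]
variable {ℳ : ℤ → Submodule K M}

lemma bgs_supports (hM : DirectSum.IsInternal ℳ) [FiniteDimensional K M]
    (hnt : Nontrivial M) :
    ∃ s t : ℤ, s ≤ t ∧ ℳ s ≠ ⊥ ∧ ℳ t ≠ ⊥ ∧ (∀ k, k < s → ℳ k = ⊥) ∧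
      (∀ k, t < k → ℳ k = ⊥) := by
  have hfin : {k : ℤ | ℳ k ≠ ⊥}.Finite := bgs_finite_support ℳ hM
  have hne : {k : ℤ | ℳ k ≠ ⊥}.Nonempty := by
    by_contra h
    rw [Set.not_nonempty_iff_eq_empty] at h
    have hall : ∀ k, ℳ k = ⊥ := by
      intro k
      by_contra hk
      exact (h ▸ (Set.mem_setOf.mpr hk : k ∈ {k : ℤ | ℳ k ≠ ⊥}) : k ∈ (∅ : Set ℤ))
    have hbot : (⨆ k, ℳ k) = ⊥ := by simp [hall]
    have htop := hM.submodule_iSup_eq_top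
    rw [hbot] at htop
    obtain ⟨x, y, hxy⟩ := hnt
    apply hxy
    have hx : x ∈ (⊥ : Submodule K M) := by rw [htop]; trivial
    have hy : y ∈ (⊥ : Submodule K M) := by rw [htop]; trivial
    rw [Submodule.mem_bot] at hx hy
    rw [hx, hy]
  set F := hfin.toFinset with hF
  have hFne : F.Nonempty := by rwa [hF, Set.Finite.toFinset_nonempty]
  refine ⟨F.min' hFne, F.max' hFne, F.min'_le _ (F.max'_mem hFne), ?_, ?_, ?_, ?_⟩
  · exact hfin.mem_toFinset.mp (F.min'_mem hFne)
  · exact hfin.mem_toFinset.mp (F.max'_mem hFne)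
  · intro k hk
    by_contra hkne
    exact absurd (F.min'_le k (hfin.mem_toFinset.mpr hkne)) (by omega)
  · intro k hk
    by_contra hkne
    exact absurd (F.le_max' k (hfin.mem_toFinset.mpr hkne)) (by omega)

lemma bgs_exists_coatom {W : Type} [AddCommGroup W] [Module A W] [Module K W]
    [IsScalarTower K A W] [FiniteDimensional K W] (P : Submodule A W) (h : P ≠ ⊤) :
    ∃ Q : Submodule A W, IsCoatom Q ∧ P ≤ Q := by
  haveI : IsNoetherian A W := isNoetherian_of_tower K inferInstance
  haveI : IsCoatomic (Submodule A W) := isCoatomic_of_orderTop_gt_wellFounded wellFounded_gt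
  rcases eq_top_or_exists_le_coatom P with h' | ⟨Q, hQ, hPQ⟩
  · exact absurd h' h
  · exact ⟨Q, hQ, hPQ⟩

lemma bgs_exists_atom {W : Type} [AddCommGroup W] [Module A W] [Module K W]
    [IsScalarTower K A W] [FiniteDimensional K W] (P : Submodule A W) (h : P ≠ ⊥) :
    ∃ S : Submodule A W, IsAtom S ∧ S ≤ P := by
  haveI : IsArtinian A W := isArtinian_of_tower K inferInstance
  haveI : IsAtomic (Submodule A W) := isAtomic_of_orderBot_wellFounded_lt wellFounded_lt
  rcases eq_bot_or_exists_atom_le P with h' | ⟨S, hS, hSP⟩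
  · exact absurd h' h
  · exact ⟨S, hS, hSP⟩

lemma bgs_smul_any (hA : DirectSum.IsInternal 𝒜) (hpos : ∀ d : ℤ, d < 0 → 𝒜 d = ⊥)
    (hMs : ∀ (d e : ℤ) (a : A), a ∈ 𝒜 d → ∀ x ∈ ℳ e, a • x ∈ ℳ (d + e))
    (a : A) {t : ℤ} {x : M} (hx : x ∈ bgsG ℳ t) : a • x ∈ bgsG ℳ t := by
  have ha : a ∈ bgsG 𝒜 0 := by rw [bgsG_zero_top hA hpos]; trivial
  simpa using bgs_smulG_mem hMs ha hx

/-- The grading filtration as an `A`-submodule. -/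
def bgsGA (𝒜 : ℤ → Submodule K A) (ℳ : ℤ → Submodule K M)
    (hA : DirectSum.IsInternal 𝒜) (hpos : ∀ d : ℤ, d < 0 → 𝒜 d = ⊥)
    (hMs : ∀ (d e : ℤ) (a : A), a ∈ 𝒜 d → ∀ x ∈ ℳ e, a • x ∈ ℳ (d + e))
    (t : ℤ) : Submodule A M where
  carrier := ↑(bgsG ℳ t)
  add_mem' := fun ha hb => (bgsG ℳ t).add_mem ha hb
  zero_mem' := (bgsG ℳ t).zero_mem
  smul_mem' := fun a x hx => bgs_smul_any hA hpos hMs a hx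

variable [FiniteDimensional K M]

lemma bgs_part_a (h1 : (1 : A) ∈ 𝒜 0)
    (hmul : ∀ (d e : ℤ) (x : A), x ∈ 𝒜 d → ∀ y ∈ 𝒜 e, x * y ∈ 𝒜 (d + e))
    (hA : DirectSum.IsInternal 𝒜) (hpos : ∀ d : ℤ, d < 0 → 𝒜 d = ⊥)
    (hss : IsSemisimpleRing
      ↥((𝒜 0).toSubalgebra h1 (fun x y hx hy => by simpa using hmul 0 0 x hx y hy)))
    (hgen : Algebra.adjoin K ((𝒜 0 : Set A) ∪ (𝒜 1 : Set A)) = ⊤)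
    (hM : DirectSum.IsInternal ℳ)
    (hMs : ∀ (d e : ℤ) (a : A), a ∈ 𝒜 d → ∀ x ∈ ℳ e, a • x ∈ ℳ (d + e))
    (hsimp : IsSimpleModule A (M ⧸ radFilt A M 1)) :
    ∃ s : ℤ, (∀ k, k < s → ℳ k = ⊥) ∧ ℳ s ≠ ⊥ ∧
      ∀ r : ℕ, radFilt A M r = bgsGA 𝒜 ℳ hA hpos hMs (s + r) := by
  haveI := hsimp
  haveI hntM : Nontrivial M := by
    have hnt : Nontrivial (M ⧸ radFilt A M 1) :=
      IsSimpleModule.nontrivial A (M ⧸ radFilt A M 1)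
    obtain ⟨u, v, huv⟩ := hnt
    obtain ⟨x, rfl⟩ := (radFilt A M 1).mkQ_surjective u
    obtain ⟨y, rfl⟩ := (radFilt A M 1).mkQ_surjective v
    exact ⟨x, y, fun h => huv (by rw [h])⟩
  obtain ⟨s, t, hst, hsne, htne, hmin, hmax⟩ := bgs_supports hM hntM
  refine ⟨s, hmin, hsne, ?_⟩
  have hGtop : bgsG ℳ s = ⊤ := bgsG_top ℳ hM hmin
  have hrad1 : radFilt A M 1 = bgsJ 𝒜 1 (⊤ : Submodule A M) :=
    bgs_radFilt_succ h1 hmul hA hpos hss 0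
  -- J ⊤ ≤ GA (s+1)
  have hJle : ∀ (u : ℤ) (N : Submodule A M), (N : Set M) ⊆ ↑(bgsG ℳ u) →
      bgsJ 𝒜 1 N ≤ bgsGA 𝒜 ℳ hA hpos hMs (u + 1) := by
    intro u N hN
    refine Submodule.span_le.mpr ?_
    rintro z ⟨a, ha, x, hx, rfl⟩
    have hxG : x ∈ bgsG ℳ u := hN hx
    have h2 := bgs_smulG_mem hMs ha hxG
    show a • x ∈ bgsG ℳ (u + 1)
    rwa [add_comm] at h2
  have hJle1 : radFilt A M 1 ≤ bgsGA 𝒜 ℳ hA hpos hMs (s + 1) := by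
    rw [hrad1]
    exact hJle s ⊤ (fun x _ => by rw [hGtop]; trivial)
  have hGAne : bgsGA 𝒜 ℳ hA hpos hMs (s + 1) ≠ ⊤ := by
    intro htop
    obtain ⟨x, hxs, hxne⟩ := Submodule.ne_bot_iff (ℳ s) |>.mp hsne
    have hxG : x ∈ bgsG ℳ (s + 1) := by
      have : x ∈ bgsGA 𝒜 ℳ hA hpos hMs (s + 1) := by rw [htop]; trivial
      exact this
    have hdisj := (hM.submodule_iSupIndep) s
    have hle2 : bgsG ℳ (s + 1) ≤ ⨆ (j : ℤ) (_ : j ≠ s), ℳ j :=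
      iSup₂_le fun k hk => le_iSup₂ (f := fun (j : ℤ) (_ : j ≠ s) => ℳ j) k (by omega)
    exact hxne (Submodule.disjoint_def.mp hdisj x hxs (hle2 hxG))
  have hco : IsCoatom (radFilt A M 1) := isSimpleModule_iff_isCoatom.mp hsimp
  have hrad1G : radFilt A M 1 = bgsGA 𝒜 ℳ hA hpos hMs (s + 1) := by
    by_contra hne2
    exact hGAne (hco.2 _ (lt_of_le_of_ne hJle1 hne2))
  -- generation by ℳ s
  have hE : Submodule.span A ((ℳ s : Set M)) = ⊤ := by
    have hsup : Submodule.span A ((ℳ s : Set M)) ⊔ bgsGA 𝒜 ℳ hA hpos hMs (s + 1) = ⊤ := by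
      rw [eq_top_iff]
      intro x _
      have hx : x ∈ (⊤ : Submodule K M) := trivial
      rw [← hM.submodule_iSup_eq_top] at hx
      refine Submodule.iSup_induction
        (motive := fun x => x ∈ Submodule.span A ((ℳ s : Set M)) ⊔ bgsGA 𝒜 ℳ hA hpos hMs (s + 1))
        _ hx ?_ (zero_mem _) (fun y z hy hz => add_mem hy hz)
      intro k y hy
      rcases lt_trichotomy k s with hk | hk | hk
      · rw [hmin k hk, Submodule.mem_bot] at hy
        rw [hy]; exact zero_mem _
      · subst hk
        exact Submodule.mem_sup_left (Submodule.subset_span hy)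
      · refine Submodule.mem_sup_right ?_
        show y ∈ bgsG ℳ (s + 1)
        exact bgs_mem_G ℳ (by omega) hy
    by_contra hne3
    obtain ⟨P, hPco, hEP⟩ := bgs_exists_coatom (K := K) (Submodule.span A ((ℳ s : Set M))) hne3
    have hradP : radFilt A M 1 ≤ P := by
      rw [hrad1, ← bgs_radM_eq h1 hmul hA hpos hss M]
      exact sInf_le hPco
    have htopP : (⊤ : Submodule A M) ≤ P := by
      rw [← hsup]
      exact sup_le hEP (le_trans (le_of_eq hrad1G.symm) hradP)
    exact hPco.1 (top_le_iff.mp htopP)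
  have hstep : ∀ k : ℤ, s ≤ k →
      ℳ (k + 1) = Submodule.span K ((𝒜 1 : Set A) • (ℳ k : Set M)) := by
    intro k hk
    have hCeq := bgsC_eq h1 hmul hA hpos hgen hM hMs s hE
    set j := (k - s).toNat with hj
    have hjk : k = s + (j : ℤ) := by omega
    have h1' : ℳ (k + 1) = bgsC 𝒜 ℳ s (j + 1) := by
      rw [show k + 1 = s + ((j + 1 : ℕ) : ℤ) by push_cast; omega]
      exact hCeq (j + 1)
    have h2' : ℳ k = bgsC 𝒜 ℳ s j := by rw [hjk]; exact hCeq j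
    rw [h1', h2']
    rfl
  -- main induction
  intro r
  induction r with
  | zero =>
    refine le_antisymm (fun x _ => ?_) le_top
    show x ∈ bgsG ℳ (s + (0 : ℕ))
    rw [show s + ((0 : ℕ) : ℤ) = s by push_cast; ring, hGtop]
    trivial
  | succ r ih =>
    have hsucc : radFilt A M (r + 1) = bgsJ 𝒜 1 (radFilt A M r) :=
      bgs_radFilt_succ h1 hmul hA hpos hss r
    rw [hsucc, ih]
    refine le_antisymm ?_ ?_
    · refine le_trans (hJle (s + (r : ℤ)) _ (fun x hx => hx)) (le_of_eq ?_)
      congr 1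
      push_cast; ring
    · intro x hx
      have hx2 : x ∈ bgsG ℳ (s + ((r + 1 : ℕ) : ℤ)) := hx
      refine bgsG_induction (p := fun y => y ∈ bgsJ 𝒜 1 (bgsGA 𝒜 ℳ hA hpos hMs (s + r)))
        ℳ hx2 ?_ (zero_mem _) (fun y z hy hz => add_mem hy hz)
      intro k hk y hy
      have hk1 : s ≤ k - 1 := by push_cast at hk; omega
      have hky : y ∈ Submodule.span K ((𝒜 1 : Set A) • (ℳ (k - 1) : Set M)) := by
        rw [← hstep (k - 1) hk1, sub_add_cancel]
        exact hy
      refine Submodule.span_induction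
        (p := fun z _ => z ∈ bgsJ 𝒜 1 (bgsGA 𝒜 ℳ hA hpos hMs (s + r)))
        ?_ (zero_mem _) (fun z w _ _ hz hw => add_mem hz hw) ?_ hky
      · rintro z ⟨a, ha, w, hw, rfl⟩
        refine Submodule.subset_span ⟨a, bgs_mem_G 𝒜 le_rfl ha, w, ?_, rfl⟩
        show w ∈ bgsG ℳ (s + r)
        exact bgs_mem_G ℳ (by push_cast at hk ⊢; omega) hw
      · intro c z _ hz
        have : c • z = (algebraMap K A c) • z := (algebraMap_smul A c z).symm
        rw [this]
        exact Submodule.smul_mem _ _ hz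
end PartA2
section PartB
variable {K A : Type} [Field K] [Ring A] [Algebra K A] [FiniteDimensional K A]
variable {𝒜 : ℤ → Submodule K A}
variable {M : Type} [AddCommGroup M] [Module K M] [Module A M] [IsScalarTower K A M]
variable {ℳ : ℤ → Submodule K M}

lemma bgs_smul_decompose [DirectSum.Decomposition ℳ]
    (hMs : ∀ (d e : ℤ) (a : A), a ∈ 𝒜 d → ∀ x ∈ ℳ e, a • x ∈ ℳ (d + e))
    {d : ℤ} {w : A} (hw : w ∈ 𝒜 d) (z : M) (k : ℤ) :
    w • (DirectSum.decompose ℳ z k : M) = (DirectSum.decompose ℳ (w • z) (d + k) : M) := by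
  classical
  conv_rhs => rw [← DirectSum.sum_support_decompose ℳ z]
  rw [Finset.smul_sum, DirectSum.decompose_sum, DFinsupp.finset_sum_apply,
    AddSubmonoidClass.coe_finset_sum]
  rw [Finset.sum_eq_single k ?h0 ?h1]
  case h0 =>
    intro j _ hjne
    rw [DirectSum.decompose_of_mem_ne ℳ
      (hMs d j w hw _ (SetLike.coe_mem _)) (by omega : d + j ≠ d + k)]
  case h1 =>
    intro hk
    rw [DFinsupp.notMem_support_iff.mp hk]
    simp
  exact (DirectSum.decompose_of_mem_same ℳ (hMs d k w hw _ (SetLike.coe_mem _))).symm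

lemma bgs_decompose_smul_single [DirectSum.Decomposition ℳ] [DirectSum.Decomposition 𝒜]
    (hMs : ∀ (d e : ℤ) (a : A), a ∈ 𝒜 d → ∀ x ∈ ℳ e, a • x ∈ ℳ (d + e))
    (a : A) {k : ℤ} {xk : M} (hxk : xk ∈ ℳ k) (u : ℤ) :
    (DirectSum.decompose ℳ (a • xk) u : M) = (DirectSum.decompose 𝒜 a (u - k) : A) • xk := by
  classical
  conv_lhs => rw [← DirectSum.sum_support_decompose 𝒜 a]
  rw [Finset.sum_smul, DirectSum.decompose_sum, DFinsupp.finset_sum_apply,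
    AddSubmonoidClass.coe_finset_sum]
  rw [Finset.sum_eq_single (u - k) ?h0 ?h1]
  case h0 =>
    intro j _ hjne
    rw [DirectSum.decompose_of_mem_ne ℳ
      (hMs j k _ (SetLike.coe_mem _) xk hxk) (by omega : j + k ≠ u)]
  case h1 =>
    intro hk
    rw [DFinsupp.notMem_support_iff.mp hk]
    simp
  have hmem := hMs (u - k) k _ (SetLike.coe_mem (DirectSum.decompose 𝒜 a (u - k))) xk hxk
  rw [show u - k + k = u by ring] at hmem
  exact DirectSum.decompose_of_mem_same ℳ hmem

variable [FiniteDimensional K M]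

lemma bgs_part_b (h1 : (1 : A) ∈ 𝒜 0)
    (hmul : ∀ (d e : ℤ) (x : A), x ∈ 𝒜 d → ∀ y ∈ 𝒜 e, x * y ∈ 𝒜 (d + e))
    (hA : DirectSum.IsInternal 𝒜) (hpos : ∀ d : ℤ, d < 0 → 𝒜 d = ⊥)
    (hss : IsSemisimpleRing
      ↥((𝒜 0).toSubalgebra h1 (fun x y hx hy => by simpa using hmul 0 0 x hx y hy)))
    (hgen : Algebra.adjoin K ((𝒜 0 : Set A) ∪ (𝒜 1 : Set A)) = ⊤)
    (hM : DirectSum.IsInternal ℳ)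
    (hMs : ∀ (d e : ℤ) (a : A), a ∈ 𝒜 d → ∀ x ∈ ℳ e, a • x ∈ ℳ (d + e))
    (hsimp2 : IsSimpleModule A ↥(socFilt A M 1)) :
    ∃ t : ℤ, (∀ k, t < k → ℳ k = ⊥) ∧ ℳ t ≠ ⊥ ∧
      ∀ r : ℕ, (socFilt A M r : Set M) = ↑(bgsG ℳ (t + 1 - r)) := by
  haveI := hsimp2
  haveI hntM : Nontrivial M := by
    obtain ⟨u, v, huv⟩ := IsSimpleModule.nontrivial A ↥(socFilt A M 1)
    exact ⟨↑u, ↑v, fun h => huv (Subtype.ext h)⟩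
  obtain ⟨s, t, hst, hsne, htne, hmin, hmax⟩ := bgs_supports hM hntM
  refine ⟨t, hmax, htne, ?_⟩
  have hsoc : ∀ r : ℕ, socFilt A M r = bgsAnn 𝒜 hmul hA hpos r M :=
    bgs_socFilt_eq h1 hmul hA hpos hss hgen
  have hMtAnn : ∀ x ∈ ℳ t, ∀ a ∈ bgsG 𝒜 1, a • x = 0 := by
    intro x hx a ha
    refine bgsG_induction (p := fun a => a • x = 0) 𝒜 ha (fun d hd w hw => ?_)
      (zero_smul A x) (fun y z hy hz => by
        show (y + z) • x = 0
        have hy' : y • x = 0 := hy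
        have hz' : z • x = 0 := hz
        rw [add_smul, hy', hz', add_zero])
    show w • x = 0
    have h2 := hMs d t w hw x hx
    rw [hmax (d + t) (by omega), Submodule.mem_bot] at h2
    exact h2
  let MtA : Submodule A M :=
    { carrier := ↑(ℳ t)
      add_mem' := fun ha hb => (ℳ t).add_mem ha hb
      zero_mem' := (ℳ t).zero_mem
      smul_mem' := fun a x hx => by
        have ha : a ∈ bgsG 𝒜 0 := by rw [bgsG_zero_top hA hpos]; trivial
        refine bgsG_induction (p := fun a => a • x ∈ ℳ t) 𝒜 ha (fun d hd w hw => ?_) ?_ ?_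
        · rcases eq_or_lt_of_le hd with hd0 | hd1
          · have h2 := hMs d t w hw x hx
            rw [← hd0, zero_add] at h2
            exact h2
          · have h2 := hMs d t w hw x hx
            rw [hmax (d + t) (by omega), Submodule.mem_bot] at h2
            rw [h2]; exact zero_mem _
        · show (0 : A) • x ∈ _; rw [zero_smul]; exact zero_mem _
        · intro y z hy hz; show (y + z) • x ∈ _; rw [add_smul]; exact add_mem hy hz }
  have hatom : IsAtom (socFilt A M 1) := isSimpleModule_iff_isAtom.mp hsimp2
  have hMtle : MtA ≤ socFilt A M 1 := by
    rw [hsoc 1]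
    intro x hx a ha
    exact hMtAnn x hx a (by rwa [Nat.cast_one] at ha)
  have hMt_eq : MtA = socFilt A M 1 := by
    rcases hatom.le_iff.mp hMtle with hb | he
    · exfalso
      apply htne
      rw [Submodule.eq_bot_iff]
      intro x hx
      have hx2 : x ∈ MtA := hx
      rw [hb] at hx2
      simpa using hx2
    · exact he
  intro r
  rw [hsoc r]
  ext x
  constructor
  · -- Ann r ⊆ G (t+1-r)
    intro hx
    have hx' : ∀ a ∈ bgsG 𝒜 (r : ℤ), a • x = 0 := hx
    classical
    letI := hM.chooseDecomposition
    letI := hA.chooseDecomposition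
    have hcomp : ∀ k : ℤ, ∀ a ∈ bgsG 𝒜 (r : ℤ), a • (DirectSum.decompose ℳ x k : M) = 0 := by
      intro k a ha
      refine bgsG_induction (p := fun a => a • (DirectSum.decompose ℳ x k : M) = 0) 𝒜 ha
        (fun d hd w hw => ?_) (zero_smul A _)
        (fun y z hy hz => by
          show (y + z) • (DirectSum.decompose ℳ x k : M) = 0
          have hy' : y • (DirectSum.decompose ℳ x k : M) = 0 := hy
          have hz' : z • (DirectSum.decompose ℳ x k : M) = 0 := hz
          rw [add_smul, hy', hz', add_zero])
      show w • (DirectSum.decompose ℳ x k : M) = 0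
      rw [bgs_smul_decompose hMs hw x k, hx' w (bgs_mem_G 𝒜 hd hw)]
      simp
    have hxk : ∀ k : ℤ, (DirectSum.decompose ℳ x k : M) ≠ 0 → (t + 1 - (r : ℤ)) ≤ k := by
      intro k hk0
      by_contra hklt
      push_neg at hklt
      set xk := (DirectSum.decompose ℳ x k : M) with hxkdef
      have hspan : Submodule.span A ({xk} : Set M) ≠ ⊥ := by
        simpa [Submodule.span_singleton_eq_bot] using hk0
      obtain ⟨S, hS, hSle⟩ := bgs_exists_atom (K := K) _ hspan
      have hSsoc : S ≤ socFilt A M 1 := by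
        rw [hsoc 1, ← bgs_socM_eq h1 hmul hA hpos hss M]
        exact le_sSup hS
      have hSeq : S = MtA := by
        rw [hMt_eq]
        exact (hatom.le_iff.mp hSsoc).resolve_left hS.1
      obtain ⟨y, hyt, hyne⟩ := Submodule.ne_bot_iff (ℳ t) |>.mp htne
      have hyS : y ∈ S := by rw [hSeq]; exact hyt
      obtain ⟨a, ha_eq⟩ := Submodule.mem_span_singleton.mp (hSle hyS)
      have hyd : y = (DirectSum.decompose 𝒜 a (t - k) : A) • xk := by
        have h1' : y = (DirectSum.decompose ℳ y t : M) :=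
          (DirectSum.decompose_of_mem_same ℳ hyt).symm
        conv_lhs => rw [h1', ← ha_eq]
        exact bgs_decompose_smul_single hMs a (SetLike.coe_mem _) t
      have hdeg : (r : ℤ) ≤ t - k := by omega
      have hz := hcomp k _ (bgs_mem_G 𝒜 hdeg (SetLike.coe_mem (DirectSum.decompose 𝒜 a (t - k))))
      rw [← hyd] at hz
      exact hyne hz
    have hxsum := DirectSum.sum_support_decompose ℳ x
    show x ∈ bgsG ℳ (t + 1 - (r : ℤ))
    rw [← hxsum]
    refine Submodule.sum_mem _ fun k hk => ?_
    have hkne : (DirectSum.decompose ℳ x k : M) ≠ 0 := by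
      have := DFinsupp.mem_support_iff.mp hk
      simpa [ZeroMemClass.coe_eq_zero] using this
    exact bgs_mem_G ℳ (hxk k hkne) (SetLike.coe_mem _)
  · -- G (t+1-r) ⊆ Ann r
    intro hx
    have hx2 : x ∈ bgsG ℳ (t + 1 - (r : ℤ)) := hx
    show ∀ a ∈ bgsG 𝒜 (r : ℤ), a • x = 0
    refine bgsG_induction (p := fun y => ∀ a ∈ bgsG 𝒜 (r : ℤ), a • y = 0) ℳ hx2 ?_ ?_ ?_
    · intro k hk z hz a ha
      refine bgsG_induction (p := fun a => a • z = 0) 𝒜 ha (fun d hd w hw => ?_)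
        (zero_smul A z) (fun u v hu hv => by
          show (u + v) • z = 0
          have hu' : u • z = 0 := hu
          have hv' : v • z = 0 := hv
          rw [add_smul, hu', hv', add_zero])
      show w • z = 0
      have h2 := hMs d k w hw z hz
      rw [hmax (d + k) (by omega), Submodule.mem_bot] at h2
      exact h2
    · intro a _; exact smul_zero a
    · intro z w hz hw a ha; rw [smul_add, hz a ha, hw a ha, add_zero]
end PartB
/-- [BGS, Proposition 2.4.1]: let `A` be a finite dimensional positively graded algebra
over a field `K` with `A_0` semisimple and `A` generated by `A_0` and `A_1`, and let `M`
be a finite dimensional graded `A`-module.  (a) If `M ⧸ rad M` is irreducible then the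
radical filtration of `M` coincides, up to shift, with the grading filtration
`Gr_d M = ⊕_{k ≥ d} M_k`.  (b) If `soc M` is irreducible then the socle filtration
coincides, up to shift, with the grading filtration.  (c) Consequently `M` is rigid
(`rad^r M = soc^{ℓℓ(M)-r} M` for `0 ≤ r ≤ ℓℓ(M)`) whenever both `M ⧸ rad M` and `soc M`
are irreducible. -/
theorem positively_graded_radical_grading_rigidity
    (K : Type) [Field K] (A : Type) [Ring A] [Algebra K A] [FiniteDimensional K A]
    (𝒜 : ℤ → Submodule K A) (hA : DirectSum.IsInternal 𝒜) (h1 : (1 : A) ∈ 𝒜 0)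
    (hmul : ∀ (d e : ℤ) (x : A), x ∈ 𝒜 d → ∀ y ∈ 𝒜 e, x * y ∈ 𝒜 (d + e))
    (hpos : ∀ d : ℤ, d < 0 → 𝒜 d = ⊥)
    (hss : IsSemisimpleRing
      ↥((𝒜 0).toSubalgebra h1 (fun x y hx hy => by simpa using hmul 0 0 x hx y hy)))
    (hgen : Algebra.adjoin K ((𝒜 0 : Set A) ∪ (𝒜 1 : Set A)) = ⊤)
    (M : Type) [AddCommGroup M] [Module K M] [Module A M] [IsScalarTower K A M]
    [FiniteDimensional K M]
    (ℳ : ℤ → Submodule K M) (hM : DirectSum.IsInternal ℳ)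
    (hMs : ∀ (d e : ℤ) (a : A), a ∈ 𝒜 d → ∀ x ∈ ℳ e, a • x ∈ ℳ (d + e)) :
    (IsSimpleModule A (M ⧸ radFilt A M 1) →
      ∃ s : ℤ, ∀ r : ℕ, (radFilt A M r : Set M)
        = ↑(⨆ (k : ℤ) (_ : s + (r : ℤ) ≤ k), ℳ k)) ∧
    (IsSimpleModule A ↥(socFilt A M 1) →
      ∃ s : ℤ, ∀ r : ℕ, (socFilt A M r : Set M)
        = ↑(⨆ (k : ℤ) (_ : s - (r : ℤ) ≤ k), ℳ k)) ∧
    (IsSimpleModule A (M ⧸ radFilt A M 1) → IsSimpleModule A ↥(socFilt A M 1) →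
      ∀ r ≤ sInf {k | radFilt A M k = ⊥},
        radFilt A M r = socFilt A M (sInf {k | radFilt A M k = ⊥} - r)) := by
  refine ⟨?_, ?_, ?_⟩
  · intro hsimp
    obtain ⟨s, hmin, hsne, hrad⟩ := bgs_part_a h1 hmul hA hpos hss hgen hM hMs hsimp
    refine ⟨s, fun r => ?_⟩
    rw [hrad r]
    rfl
  · intro hsimp2
    obtain ⟨t, hmax, htne, hsoc⟩ := bgs_part_b h1 hmul hA hpos hss hgen hM hMs hsimp2
    refine ⟨t + 1, fun r => ?_⟩
    exact hsoc r
  · intro hsimp hsimp2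
    obtain ⟨s, hmin, hsne, hrad⟩ := bgs_part_a h1 hmul hA hpos hss hgen hM hMs hsimp
    obtain ⟨t, hmax, htne, hsoc⟩ := bgs_part_b h1 hmul hA hpos hss hgen hM hMs hsimp2
    have hts : s ≤ t := by
      by_contra h
      exact hsne (hmax s (by omega))
    have hGbotIff : ∀ u : ℤ, bgsG ℳ u = ⊥ ↔ t < u := by
      intro u
      constructor
      · intro hbot
        by_contra h
        apply htne
        rw [Submodule.eq_bot_iff]
        intro x hx
        have hxg : x ∈ bgsG ℳ u := bgs_mem_G ℳ (by omega) hx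
        rw [hbot] at hxg
        simpa using hxg
      · intro hu
        exact bgsG_bot ℳ (fun k hk => hmax k (by omega))
    have hradbot : ∀ k : ℕ, radFilt A M k = ⊥ ↔ t < s + (k : ℤ) := by
      intro k
      rw [hrad k]
      rw [← hGbotIff (s + (k : ℤ))]
      constructor
      · intro h
        rw [Submodule.eq_bot_iff]
        intro x hx
        have hx2 : x ∈ bgsGA 𝒜 ℳ hA hpos hMs (s + (k : ℤ)) := hx
        rw [h] at hx2
        simpa using hx2
      · intro h
        rw [Submodule.eq_bot_iff]
        intro x hx
        have hx2 : x ∈ bgsG ℳ (s + (k : ℤ)) := hx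
        rw [h] at hx2
        simpa using hx2
    set L : ℕ := (t - s + 1).toNat with hL
    have hLZ : (L : ℤ) = t - s + 1 := Int.toNat_of_nonneg (by omega)
    have hsInf : sInf {k : ℕ | radFilt A M k = ⊥} = L := by
      have hset : {k : ℕ | radFilt A M k = ⊥} = {k : ℕ | L ≤ k} := by
        ext k
        rw [Set.mem_setOf, Set.mem_setOf, hradbot k]
        omega
      rw [hset]
      refine le_antisymm (Nat.sInf_le (by simp)) ?_
      have hmem := Nat.sInf_mem (⟨L, by simp⟩ : Set.Nonempty {k : ℕ | L ≤ k})
      exact hmem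
    rw [hsInf]
    intro r hr
    apply SetLike.coe_injective
    have hset1 : (radFilt A M r : Set M) = ↑(bgsG ℳ (s + (r : ℤ))) := by
      rw [hrad r]; rfl
    have hidx : t + 1 - ((L - r : ℕ) : ℤ) = s + (r : ℤ) := by omega
    rw [hset1, hsoc (L - r), hidx]
end

section
/- Every Koszul algebra is quadratic: if A = ⊕_{d≥0} A_d is a Koszul algebra over a field (A_0 semisimple and A_0 admits a graded projective resolution ⋯ → P² → P¹ → P⁰ → A_0 → 0 with P^d generated in degree d), then A is generated as an algebra by A_0 and A_1, with defining relations in degree 2. -/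
set_option linter.unusedSectionVars false
set_option maxHeartbeats 1000000

open DirectSum

section Graded
variable {K : Type} [Field K] {M : Type} [AddCommGroup M] [Module K M]
variable (ℳ : ℤ → Submodule K M) [DirectSum.Decomposition ℳ]

noncomputable def gcomp (d : ℤ) : M →ₗ[K] M :=
  (ℳ d).subtype ∘ₗ (DirectSum.component K ℤ (fun i => ↥(ℳ i)) d) ∘ₗ
    (DirectSum.decomposeLinearEquiv ℳ).toLinearMap

lemma gcomp_mem (d : ℤ) (x : M) : gcomp ℳ d x ∈ ℳ d := (DirectSum.decompose ℳ x d).2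

lemma gcomp_of_mem_same {d : ℤ} {x : M} (h : x ∈ ℳ d) : gcomp ℳ d x = x :=
  DirectSum.decompose_of_mem_same ℳ h

lemma gcomp_of_mem_ne {d e : ℤ} {x : M} (h : x ∈ ℳ d) (hde : d ≠ e) : gcomp ℳ e x = 0 :=
  DirectSum.decompose_of_mem_ne ℳ h hde

lemma gcomp_sum (x : M) : ∃ s : Finset ℤ, x = ∑ d ∈ s, gcomp ℳ d x := by
  classical
  refine ⟨(DirectSum.decompose ℳ x).support, ?_⟩
  conv_lhs => rw [← DirectSum.sum_support_decompose ℳ x]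
  rfl

lemma decomp_induction {p : M → Prop} (h0 : p 0)
    (hhom : ∀ (d : ℤ) (x : M), x ∈ ℳ d → p x) (hadd : ∀ x y, p x → p y → p (x + y)) :
    ∀ x, p x := fun x =>
  DirectSum.Decomposition.inductionOn ℳ h0 (fun {i} z => hhom i z z.2) hadd x

/-- a graded (additive) map commutes with taking components. -/
lemma gcomp_comm {N : Type} [AddCommGroup N] [Module K N]
    (𝒩 : ℤ → Submodule K N) [DirectSum.Decomposition 𝒩]
    (φ : M →+ N) (hφ : ∀ (d : ℤ) (x : M), x ∈ ℳ d → φ x ∈ 𝒩 d) (d : ℤ) (x : M) :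
    φ (gcomp ℳ d x) = gcomp 𝒩 d (φ x) := by
  induction x using decomp_induction ℳ with
  | h0 => simp
  | hhom e y hy =>
    rcases eq_or_ne e d with rfl | hne
    · rw [gcomp_of_mem_same ℳ hy, gcomp_of_mem_same 𝒩 (hφ _ _ hy)]
    · rw [gcomp_of_mem_ne ℳ hy hne, gcomp_of_mem_ne 𝒩 (hφ _ _ hy) hne, map_zero]
  | hadd y z hy hz => simp only [map_add, hy, hz]

end Graded

section GradedMod
variable {K A : Type} [Field K] [Ring A] [Algebra K A]
variable (𝒜 : ℤ → Submodule K A) [DirectSum.Decomposition 𝒜]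
variable {M : Type} [AddCommGroup M] [Module K M] [Module A M] [IsScalarTower K A M]
variable (ℳ : ℤ → Submodule K M) [DirectSum.Decomposition ℳ]
variable (hsm : ∀ (d e : ℤ) (a : A), a ∈ 𝒜 d → ∀ x ∈ ℳ e, a • x ∈ ℳ (d + e))

include hsm in
lemma gcomp_smul_homog {e : ℤ} (d : ℤ) (a : A) {x : M} (hx : x ∈ ℳ e) :
    gcomp ℳ (d + e) (a • x) = (gcomp 𝒜 d a) • x := by
  induction a using decomp_induction 𝒜 with
  | h0 => simp
  | hhom f b hb =>
    rcases eq_or_ne f d with rfl | hne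
    · rw [gcomp_of_mem_same ℳ (hsm _ _ _ hb _ hx), gcomp_of_mem_same 𝒜 hb]
    · rw [gcomp_of_mem_ne ℳ (hsm _ _ _ hb _ hx) (by omega), gcomp_of_mem_ne 𝒜 hb hne, zero_smul]
  | hadd y z hy hz => rw [add_smul, map_add, hy, hz, map_add, add_smul]

include hsm in
lemma gcomp_smul_left {d : ℤ} (e : ℤ) {a : A} (ha : a ∈ 𝒜 d) (x : M) :
    gcomp ℳ (d + e) (a • x) = a • gcomp ℳ e x := by
  induction x using decomp_induction ℳ with
  | h0 => simp
  | hhom f y hy =>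
    rcases eq_or_ne f e with rfl | hne
    · rw [gcomp_of_mem_same ℳ hy, gcomp_of_mem_same ℳ (hsm _ _ _ ha _ hy)]
    · rw [gcomp_of_mem_ne ℳ hy hne, gcomp_of_mem_ne ℳ (hsm _ _ _ ha _ hy) (by omega), smul_zero]
  | hadd y z hy hz => rw [smul_add, map_add, map_add, hy, hz, smul_add]

/-- the "graded part" of a linear map. -/
noncomputable def gradedPart {N : Type} [AddCommGroup N] [Module K N]
    (p : ℤ → N →ₗ[K] N) (φ : M →ₗ[K] N) : M →ₗ[K] N :=
  (DirectSum.toModule K ℤ N (fun d => (p d) ∘ₗ φ ∘ₗ (ℳ d).subtype)) ∘ₗ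
    (DirectSum.decomposeLinearEquiv ℳ).toLinearMap

lemma gradedPart_apply_of_mem {N : Type} [AddCommGroup N] [Module K N]
    (p : ℤ → N →ₗ[K] N) (φ : M →ₗ[K] N) {d : ℤ} {x : M} (hx : x ∈ ℳ d) :
    gradedPart ℳ p φ x = p d (φ x) := by
  unfold gradedPart
  simp only [LinearMap.comp_apply, LinearEquiv.coe_toLinearMap,
    DirectSum.decomposeLinearEquiv_apply, DirectSum.decompose_of_mem ℳ hx]
  rw [← DirectSum.lof_eq_of K, DirectSum.toModule_lof]
  rfl

include hsm in
lemma gradedPart_smul {N : Type} [AddCommGroup N] [Module K N] [Module A N]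
    [IsScalarTower K A N]
    (p : ℤ → N →ₗ[K] N) (φ : M →ₗ[K] N)
    (hp : ∀ (d e : ℤ) (a : A), a ∈ 𝒜 d → ∀ n : N, p (d + e) (a • n) = a • p e n)
    (hφ : ∀ (a : A) (x : M), φ (a • x) = a • φ x)
    (a : A) (x : M) : gradedPart ℳ p φ (a • x) = a • gradedPart ℳ p φ x := by
  induction x using decomp_induction ℳ with
  | h0 => simp
  | hhom e y hy =>
    induction a using decomp_induction 𝒜 with
    | h0 => simp
    | hhom d b hb =>
      rw [gradedPart_apply_of_mem ℳ p φ (hsm d e b hb y hy),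
        gradedPart_apply_of_mem ℳ p φ hy, hφ, hp d e b hb]
    | hadd b c hbb hcc => rw [add_smul, map_add, hbb, hcc, add_smul]
  | hadd y z hy hz => rw [smul_add, map_add, map_add, hy, hz, smul_add]

end GradedMod

lemma list_split_last {α : Type} {P : α → Bool} {l : List α} {w : ℕ}
    (h : l.countP P = w + 1) :
    ∃ (l₁ : List α) (a : α) (l₂ : List α),
      l = l₁ ++ a :: l₂ ∧ P a ∧ l₁.countP P = w ∧ l₂.countP P = 0 := by
  induction l using List.reverseRecOn with
  | nil => simp at h
  | append_singleton l' g ih =>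
    rw [List.countP_append] at h
    by_cases hg : P g
    · refine ⟨l', g, [], by simp, hg, ?_, by simp⟩
      simp [List.countP_cons, hg] at h
      omega
    · simp [List.countP_cons, hg] at h
      obtain ⟨l₁, a, l₂, rfl, ha, h1, h2⟩ := ih (by omega)
      exact ⟨l₁, a, l₂ ++ [g], by simp, ha, h1, by
        rw [List.countP_append, h2]; simp [hg]⟩

section FreeWeight
variable {K : Type} [Field K] {X Y : Type}

/-- words of weight `w` : span of products of generators with exactly `w` letters from `Y`. -/
def Fw (w : ℕ) : Submodule K (FreeAlgebra K (X ⊕ Y)) :=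
  Submodule.span K {z | ∃ l : List (X ⊕ Y),
    l.countP (fun g => g.isRight) = w ∧ z = (l.map (FreeAlgebra.ι K)).prod}

lemma word_mem_Fw {w : ℕ} {l : List (X ⊕ Y)} (h : l.countP (fun g => g.isRight) = w) :
    (l.map (FreeAlgebra.ι K)).prod ∈ (Fw w : Submodule K (FreeAlgebra K (X ⊕ Y))) :=
  Submodule.subset_span ⟨l, h, rfl⟩

lemma one_mem_Fw0 : (1 : FreeAlgebra K (X ⊕ Y)) ∈ (Fw 0 : Submodule K _) := by
  simpa using word_mem_Fw (K := K) (l := ([] : List (X ⊕ Y))) rfl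

lemma algebraMap_mem_Fw0 (c : K) :
    (algebraMap K (FreeAlgebra K (X ⊕ Y))) c ∈ (Fw 0 : Submodule K _) := by
  rw [Algebra.algebraMap_eq_smul_one]
  exact Submodule.smul_mem _ _ one_mem_Fw0

lemma ι_inl_mem_Fw0 (x : X) : (FreeAlgebra.ι K (Sum.inl x : X ⊕ Y)) ∈ (Fw 0 : Submodule K _) := by
  simpa using word_mem_Fw (K := K) (l := [Sum.inl x]) rfl

lemma ι_inr_mem_Fw1 (y : Y) : (FreeAlgebra.ι K (Sum.inr y : X ⊕ Y)) ∈ (Fw 1 : Submodule K _) := by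
  simpa using word_mem_Fw (K := K) (l := [Sum.inr y]) rfl

lemma mul_mem_Fw {w w' : ℕ} {x y : FreeAlgebra K (X ⊕ Y)}
    (hx : x ∈ (Fw w : Submodule K _)) (hy : y ∈ (Fw w' : Submodule K _)) :
    x * y ∈ (Fw (w + w') : Submodule K _) := by
  induction hx using Submodule.span_induction with
  | mem z hz =>
    obtain ⟨l, hl, rfl⟩ := hz
    induction hy using Submodule.span_induction with
    | mem z' hz' =>
      obtain ⟨l', hl', rfl⟩ := hz'
      rw [← List.prod_append, ← List.map_append]
      exact word_mem_Fw (by rw [List.countP_append, hl, hl'])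
    | zero => simp
    | add a b _ _ ha hb => rw [mul_add]; exact add_mem ha hb
    | smul c a _ ha => rw [mul_smul_comm]; exact Submodule.smul_mem _ _ ha
  | zero => simp
  | add a b _ _ ha hb => rw [add_mul]; exact add_mem ha hb
  | smul c a _ ha => rw [smul_mul_assoc]; exact Submodule.smul_mem _ _ ha

lemma iSup_Fw_eq_top : (⨆ w : ℕ, (Fw w : Submodule K (FreeAlgebra K (X ⊕ Y)))) = ⊤ := by
  rw [eq_top_iff]
  rintro z -
  induction z using FreeAlgebra.induction with
  | grade0 c => exact Submodule.mem_iSup_of_mem 0 (algebraMap_mem_Fw0 c)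
  | grade1 g =>
    cases g with
    | inl x => exact Submodule.mem_iSup_of_mem 0 (ι_inl_mem_Fw0 x)
    | inr y => exact Submodule.mem_iSup_of_mem 1 (ι_inr_mem_Fw1 y)
  | mul a b ha hb =>
    rw [Submodule.mem_iSup_iff_exists_finsupp] at ha hb
    obtain ⟨f, hf, rfl⟩ := ha
    obtain ⟨g, hg, rfl⟩ := hb
    classical
    rw [Finsupp.sum, Finsupp.sum, Finset.sum_mul_sum]
    apply Submodule.sum_mem
    intro w _
    apply Submodule.sum_mem
    intro w' _
    exact Submodule.mem_iSup_of_mem (w + w') (mul_mem_Fw (hf w) (hg w'))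
  | add a b ha hb => exact add_mem ha hb

variable {A : Type} [Ring A] [Algebra K A] (𝒜 : ℤ → Submodule K A)
variable (h1 : (1 : A) ∈ 𝒜 0)
variable (hmul : ∀ (d e : ℤ) (x : A), x ∈ 𝒜 d → ∀ y ∈ 𝒜 e, x * y ∈ 𝒜 (d + e))
variable (f : X ⊕ Y → A) (hf0 : ∀ x, f (Sum.inl x) ∈ 𝒜 0) (hf1 : ∀ y, f (Sum.inr y) ∈ 𝒜 1)

include h1 hmul hf0 hf1 in
lemma pi_word (l : List (X ⊕ Y)) :
    (FreeAlgebra.lift K f) ((l.map (FreeAlgebra.ι K)).prod)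
      ∈ 𝒜 (l.countP (fun g => g.isRight) : ℤ) := by
  induction l with
  | nil => simpa using h1
  | cons g l ih =>
    rw [List.map_cons, List.prod_cons, map_mul, FreeAlgebra.lift_ι_apply]
    have hc : (List.countP (fun g => g.isRight) (g :: l) : ℤ) =
        (if (fun g : X ⊕ Y => g.isRight) g then 1 else 0) +
          (l.countP (fun g => g.isRight) : ℤ) := by
      rw [List.countP_cons]
      push_cast
      split <;> omega
    rw [hc]
    cases g with
    | inl x => simpa using hmul _ _ _ (hf0 x) _ ih
    | inr y => simpa using hmul _ _ _ (hf1 y) _ ih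

include h1 hmul hf0 hf1 in
lemma pi_Fw {w : ℕ} {x : FreeAlgebra K (X ⊕ Y)} (hx : x ∈ (Fw w : Submodule K _)) :
    (FreeAlgebra.lift K f) x ∈ 𝒜 (w : ℤ) := by
  induction hx using Submodule.span_induction with
  | mem z hz =>
    obtain ⟨l, hl, rfl⟩ := hz
    have := pi_word 𝒜 h1 hmul f hf0 hf1 l
    rwa [hl] at this
  | zero => simp
  | add a b _ _ ha hb => rw [map_add]; exact add_mem ha hb
  | smul c a _ ha => rw [map_smul]; exact Submodule.smul_mem _ _ ha

end FreeWeight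

/-- The (left) ideal of positively graded elements, `A_{>0}`. -/
noncomputable def posIdeal (K A : Type) [Field K] [Ring A] [Algebra K A]
    (𝒜 : ℤ → Submodule K A) : Ideal A :=
  Ideal.span {x : A | ∃ d : ℤ, 0 < d ∧ x ∈ 𝒜 d}

/-- [BGS, Corollary 2.3.3]: every Koszul algebra is quadratic.  Let `A` be a positively
graded algebra over a field `K` with `A_0` semisimple, and suppose the `A`-module
`A_0 = A ⧸ A_{>0}` admits a graded projective resolution `⋯ → P¹ → P⁰ → A_0 → 0` in
which each `P^i` is generated by its degree-`i` component (`A` is Koszul).  Then `A` is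
quadratic: the canonical map `π` from the free algebra on `A_0 ⊕ A_1` onto `A` is
surjective, and its kernel is generated, as a two-sided ideal, by its elements of weight
at most `2` (where letters from `A_1` have weight one and letters from `A_0` weight
zero), i.e. `A` is generated by `A_0` and `A_1` with defining relations in degree `≤ 2`. -/
theorem koszul_implies_quadratic
    (K : Type) [Field K] (A : Type) [Ring A] [Algebra K A]
    (𝒜 : ℤ → Submodule K A) (hA : DirectSum.IsInternal 𝒜) (h1 : (1 : A) ∈ 𝒜 0)
    (hmul : ∀ (d e : ℤ) (x : A), x ∈ 𝒜 d → ∀ y ∈ 𝒜 e, x * y ∈ 𝒜 (d + e))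
    (hpos : ∀ d : ℤ, d < 0 → 𝒜 d = ⊥)
    (hss : IsSemisimpleRing
      ↥((𝒜 0).toSubalgebra h1 (fun x y hx hy => by simpa using hmul 0 0 x hx y hy)))
    -- a graded projective resolution of `A_0` with `P^i` generated in degree `i`
    (Pr : ℕ → Type) [∀ i, AddCommGroup (Pr i)] [∀ i, Module K (Pr i)]
    [∀ i, Module A (Pr i)] [∀ i, IsScalarTower K A (Pr i)]
    (hPproj : ∀ i, Module.Projective A (Pr i))
    (Pgr : ∀ i, ℤ → Submodule K (Pr i))
    (hPgr : ∀ i, DirectSum.IsInternal (Pgr i))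
    (hPgrs : ∀ (i : ℕ) (d e : ℤ) (a : A), a ∈ 𝒜 d → ∀ x ∈ Pgr i e, a • x ∈ Pgr i (d + e))
    (hgen : ∀ i : ℕ, Submodule.span A ((Pgr i i : Set (Pr i))) = ⊤)
    (δ : ∀ i : ℕ, Pr (i + 1) →ₗ[A] Pr i)
    (hδgr : ∀ (i : ℕ) (d : ℤ), ∀ x ∈ Pgr (i + 1) d, δ i x ∈ Pgr i d)
    (εm : Pr 0 →ₗ[A] (A ⧸ posIdeal K A 𝒜))
    (hεsurj : Function.Surjective εm)
    (hεgr : ∀ (d : ℤ), ∀ x ∈ Pgr 0 d, ∃ a ∈ 𝒜 d, εm x = Submodule.Quotient.mk a)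
    (hexact0 : LinearMap.ker εm = LinearMap.range (δ 0))
    (hexact : ∀ i : ℕ, LinearMap.ker (δ i) = LinearMap.range (δ (i + 1))) :
    Function.Surjective
      (FreeAlgebra.lift K
        (Sum.elim (fun a : ↥(𝒜 0) => (a : A)) (fun a : ↥(𝒜 1) => (a : A)))) ∧
    TwoSidedIdeal.ker
        (FreeAlgebra.lift K
          (Sum.elim (fun a : ↥(𝒜 0) => (a : A)) (fun a : ↥(𝒜 1) => (a : A))))
      = TwoSidedIdeal.span
          {x : FreeAlgebra K (↥(𝒜 0) ⊕ ↥(𝒜 1)) |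
            x ∈ Submodule.span K
              {z : FreeAlgebra K (↥(𝒜 0) ⊕ ↥(𝒜 1)) |
                ∃ lw : List (↥(𝒜 0) ⊕ ↥(𝒜 1)),
                  lw.countP (fun g => g.isRight) ≤ 2 ∧
                  z = (lw.map (FreeAlgebra.ι K)).prod} ∧
            FreeAlgebra.lift K
              (Sum.elim (fun a : ↥(𝒜 0) => (a : A)) (fun a : ↥(𝒜 1) => (a : A))) x = 0} := by
  classical
  letI : DirectSum.Decomposition 𝒜 := hA.chooseDecomposition
  letI : DirectSum.Decomposition (Pgr 0) := (hPgr 0).chooseDecomposition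
  letI : DirectSum.Decomposition (Pgr 1) := (hPgr 1).chooseDecomposition
  letI : DirectSum.Decomposition (Pgr 2) := (hPgr 2).chooseDecomposition
  set G := (↥(𝒜 0) ⊕ ↥(𝒜 1)) with hG
  set π := FreeAlgebra.lift K
      (Sum.elim (fun a : ↥(𝒜 0) => (a : A)) (fun a : ↥(𝒜 1) => (a : A))) with hπdef
  -- basic lemmas about `π`
  have hπinl : ∀ a : ↥(𝒜 0), π (FreeAlgebra.ι K (Sum.inl a : G)) = ↑a := by
    intro a; rw [hπdef, FreeAlgebra.lift_ι_apply]; rfl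
  have hπinr : ∀ a : ↥(𝒜 1), π (FreeAlgebra.ι K (Sum.inr a : G)) = ↑a := by
    intro a; rw [hπdef, FreeAlgebra.lift_ι_apply]; rfl
  have hπFw : ∀ {w : ℕ} {x : FreeAlgebra K G}, x ∈ (Fw w : Submodule K _) → π x ∈ 𝒜 (w : ℤ) :=
    fun {w x} hx => pi_Fw 𝒜 h1 hmul _ (fun a => a.2) (fun a => a.2) hx
  -- `𝒜` is a graded module over itself (with `•` being `*`)
  have hsmA : ∀ (d e : ℤ) (a : A), a ∈ 𝒜 d → ∀ x ∈ 𝒜 e, a • x ∈ 𝒜 (d + e) := by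
    intro d e a ha x hx
    simpa [smul_eq_mul] using hmul d e a ha x hx
  -- facts about the positive ideal
  have hposmem : ∀ {d : ℤ} {a : A}, 0 < d → a ∈ 𝒜 d → a ∈ posIdeal K A 𝒜 :=
    fun {d a} hd ha => Ideal.subset_span ⟨d, hd, ha⟩
  have hpos_c0 : ∀ y ∈ posIdeal K A 𝒜, gcomp 𝒜 0 y = 0 := by
    have hc0mul : ∀ (a y : A), gcomp 𝒜 0 y = 0 → gcomp 𝒜 0 (a * y) = 0 := by
      intro a y hy
      induction a using decomp_induction 𝒜 with
      | h0 => simp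
      | hhom d b hb =>
        rcases lt_trichotomy d 0 with hd | rfl | hd
        · have hb0 : b = 0 := by rw [hpos d hd] at hb; simpa using hb
          simp [hb0]
        · have h := gcomp_smul_left 𝒜 𝒜 hsmA (d := 0) 0 hb y
          simpa [smul_eq_mul, hy] using h
        · have h := gcomp_smul_left 𝒜 𝒜 hsmA (d := d) (-d) hb y
          rw [add_neg_cancel] at h
          have h2 : gcomp 𝒜 (-d) y = 0 := by
            have hm := gcomp_mem 𝒜 (-d) y
            rw [hpos _ (by omega)] at hm; simpa using hm
          simpa [smul_eq_mul, h2] using h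
      | hadd a b ha hb => rw [add_mul, map_add, ha, hb, add_zero]
    intro y hy
    let I0 : Ideal A :=
      { carrier := {y | gcomp 𝒜 0 y = 0}
        add_mem' := fun ha hb => by
          simp only [Set.mem_setOf_eq] at *; rw [map_add, ha, hb, add_zero]
        zero_mem' := by simp
        smul_mem' := fun a y hy => by simpa [smul_eq_mul] using hc0mul a y hy }
    have hle : posIdeal K A 𝒜 ≤ I0 := Ideal.span_le.mpr (by
      rintro z ⟨d, hd, hz⟩
      exact gcomp_of_mem_ne 𝒜 hz (by omega))
    exact hle hy
  have hA0pos : ∀ y ∈ 𝒜 0, y ∈ posIdeal K A 𝒜 → y = 0 := by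
    intro y hy0 hyp
    rw [← gcomp_of_mem_same 𝒜 hy0, hpos_c0 y hyp]
  have hposgcomp : ∀ y ∈ posIdeal K A 𝒜, ∀ d : ℤ, gcomp 𝒜 d y ∈ posIdeal K A 𝒜 := by
    have hmulg : ∀ (a y : A), (∀ d, gcomp 𝒜 d y ∈ posIdeal K A 𝒜) →
        ∀ d, gcomp 𝒜 d (a * y) ∈ posIdeal K A 𝒜 := by
      intro a y hy
      induction a using decomp_induction 𝒜 with
      | h0 => intro d; simp only [zero_mul, map_zero]; exact (posIdeal K A 𝒜).zero_mem
      | hhom e b hb =>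
        intro d
        have h := gcomp_smul_left 𝒜 𝒜 hsmA (d - e) hb y
        rw [add_sub_cancel, smul_eq_mul, smul_eq_mul] at h
        rw [h]
        exact Ideal.mul_mem_left _ b (hy (d - e))
      | hadd a b ha hb =>
        intro d
        rw [add_mul, map_add]
        exact (posIdeal K A 𝒜).add_mem (ha d) (hb d)
    intro y hy
    let I1 : Ideal A :=
      { carrier := {y | ∀ d, gcomp 𝒜 d y ∈ posIdeal K A 𝒜}
        add_mem' := fun ha hb d => by
          rw [map_add]; exact (posIdeal K A 𝒜).add_mem (ha d) (hb d)
        zero_mem' := fun d => by simp only [map_zero]; exact (posIdeal K A 𝒜).zero_mem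
        smul_mem' := fun a y hy => by simpa [smul_eq_mul] using hmulg a y hy }
    have hle : posIdeal K A 𝒜 ≤ I1 := Ideal.span_le.mpr (by
      rintro z ⟨e, he, hz⟩ d
      rcases eq_or_ne e d with rfl | hne
      · rw [gcomp_of_mem_same 𝒜 hz]; exact hposmem he hz
      · rw [gcomp_of_mem_ne 𝒜 hz hne]; exact (posIdeal K A 𝒜).zero_mem)
    exact hle hy
  -- the graded lifting `εt : Pr 0 → A` of `εm`
  obtain ⟨εt, hεtmem, hεtsmul, hεtmk⟩ :
      ∃ εt : Pr 0 →ₗ[K] A, (∀ {d : ℤ} {x : Pr 0}, x ∈ Pgr 0 d → εt x ∈ 𝒜 d) ∧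
        (∀ (a : A) (x : Pr 0), εt (a • x) = a • εt x) ∧
        (∀ x : Pr 0, Submodule.Quotient.mk (εt x) = εm x) := by
    letI := hPproj 0
    obtain ⟨ε', hε'⟩ := Module.projective_lifting_property (posIdeal K A 𝒜).mkQ εm
      (Submodule.mkQ_surjective _)
    have hε'x : ∀ x, Submodule.Quotient.mk (ε' x) = εm x := by
      intro x
      rw [← hε']
      rfl
    refine ⟨gradedPart (Pgr 0) (fun d => gcomp 𝒜 d) (ε'.restrictScalars K), ?_, ?_, ?_⟩
    · intro d x hx
      rw [gradedPart_apply_of_mem _ _ _ hx]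
      exact gcomp_mem 𝒜 d _
    · exact gradedPart_smul 𝒜 (Pgr 0) (hPgrs 0) _ _
        (fun d e a ha n => gcomp_smul_left 𝒜 𝒜 hsmA e ha n)
        (fun a x => by
          rw [LinearMap.restrictScalars_apply, LinearMap.restrictScalars_apply, map_smul])
    · intro x
      induction x using decomp_induction (Pgr 0) with
      | h0 => simp
      | hhom d x hx =>
        obtain ⟨a, ha, hax⟩ := hεgr d x hx
        rw [gradedPart_apply_of_mem _ _ _ hx, LinearMap.restrictScalars_apply]
        have h2 : ε' x - a ∈ posIdeal K A 𝒜 := by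
          apply (Submodule.Quotient.eq _).mp
          rw [hε'x, hax]
        have h3 := hposgcomp _ h2 d
        rw [map_sub, gcomp_of_mem_same 𝒜 ha] at h3
        rw [hax]
        exact (Submodule.Quotient.eq _).mpr h3
      | hadd x y hx hy =>
        rw [map_add, map_add, ← hx, ← hy, Submodule.Quotient.mk_add]
  -- the cyclic vector `u`
  obtain ⟨u, hu0, hεtu⟩ : ∃ u : Pr 0, u ∈ Pgr 0 0 ∧ εt u = 1 := by
    obtain ⟨u', hu'⟩ := hεsurj (Submodule.Quotient.mk 1)
    refine ⟨gcomp (Pgr 0) 0 u', gcomp_mem _ _ _, ?_⟩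
    have hcomm : εt (gcomp (Pgr 0) 0 u') = gcomp 𝒜 0 (εt u') :=
      gcomp_comm (Pgr 0) 𝒜 εt.toAddMonoidHom (fun d x hx => hεtmem hx) 0 u'
    have h2 : εt u' - 1 ∈ posIdeal K A 𝒜 := by
      apply (Submodule.Quotient.eq _).mp
      rw [hεtmk u', hu']
    have h3 := hpos_c0 _ h2
    rw [map_sub, gcomp_of_mem_same 𝒜 h1, sub_eq_zero] at h3
    rw [hcomm, h3]
  have hεmu : εm u = Submodule.Quotient.mk (1 : A) := by
    rw [← hεtmk u, hεtu]
  -- generation: every homogeneous element of degree `n` lifts to a weight-`n` element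
  have genA : ∀ n : ℕ, ∀ a ∈ 𝒜 (n : ℤ), ∃ x ∈ (Fw n : Submodule K (FreeAlgebra K G)),
      π x = a := by
    intro n
    induction n using Nat.strong_induction_on with
    | _ n ih =>
    match n, ih with
    | 0, _ =>
      intro a ha
      exact ⟨FreeAlgebra.ι K (Sum.inl ⟨a, ha⟩ : G), ι_inl_mem_Fw0 _, hπinl _⟩
    | 1, _ =>
      intro a ha
      exact ⟨FreeAlgebra.ι K (Sum.inr ⟨a, ha⟩ : G), ι_inr_mem_Fw1 _, hπinr _⟩
    | (m + 2), ih =>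
      intro a ha
      -- `a • u` is killed by `εm`, hence comes from `P¹`
      have hau : εm (a • u) = 0 := by
        rw [map_smul, hεmu, ← Submodule.Quotient.mk_smul, smul_eq_mul, mul_one,
          Submodule.Quotient.mk_eq_zero]
        exact hposmem (by positivity) ha
      obtain ⟨q, hq⟩ : a • u ∈ LinearMap.range (δ 0) := by
        rw [← hexact0]; exact hau
      have hauPgr : a • u ∈ Pgr 0 ((m + 2 : ℕ) : ℤ) := by
        have := hPgrs 0 ((m + 2 : ℕ) : ℤ) 0 a ha u hu0
        simpa using this
      set q' := gcomp (Pgr 1) ((m + 2 : ℕ) : ℤ) q with hq'def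
      have hδ0q' : δ 0 q' = a • u := by
        have hcomm := gcomp_comm (Pgr 1) (Pgr 0) (δ 0).toAddMonoidHom (hδgr 0)
          ((m + 2 : ℕ) : ℤ) q
        simp only [LinearMap.toAddMonoidHom_coe] at hcomm
        rw [hq'def, hcomm, hq]
        exact gcomp_of_mem_same (Pgr 0) hauPgr
      -- expand `q'` over degree-one generators of `P¹` with homogeneous coefficients
      have hq'span : q' ∈ Submodule.span A ((Pgr 1 1 : Set (Pr 1))) := by
        have hg1 : Submodule.span A ((Pgr 1 1 : Set (Pr 1))) = ⊤ := by
          simpa using hgen 1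
        rw [hg1]; trivial
      rw [Submodule.mem_span_set'] at hq'span
      obtain ⟨nn, b, y, hsum⟩ := hq'span
      have hq'' : q' = ∑ j, (gcomp 𝒜 ((m + 1 : ℕ) : ℤ) (b j)) • (y j : Pr 1) := by
        have h0 : q' = gcomp (Pgr 1) ((m + 2 : ℕ) : ℤ) q' :=
          (gcomp_of_mem_same (Pgr 1) (gcomp_mem _ _ _)).symm
        calc q' = gcomp (Pgr 1) ((m + 2 : ℕ) : ℤ) q' := h0
          _ = ∑ j, gcomp (Pgr 1) ((m + 2 : ℕ) : ℤ) ((b j) • (y j : Pr 1)) := by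
              rw [← hsum, map_sum]
          _ = ∑ j, (gcomp 𝒜 ((m + 1 : ℕ) : ℤ) (b j)) • (y j : Pr 1) := by
              apply Finset.sum_congr rfl
              intro j _
              have h8 := gcomp_smul_homog 𝒜 (Pgr 1) (hPgrs 1) ((m + 1 : ℕ) : ℤ) (b j) (y j).2
              have hcast : ((m + 1 : ℕ) : ℤ) + 1 = ((m + 2 : ℕ) : ℤ) := by push_cast; ring
              rw [← hcast]
              exact h8
      -- each `δ 0 (y j)` lies in degree 1 of `P⁰`; expand over degree-zero generators
      have hyd : ∀ j : Fin nn, ∃ (kk : ℕ) (e : Fin kk → A) (x : Fin kk → Pr 0),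
          (∀ l, e l ∈ 𝒜 1) ∧ (∀ l, x l ∈ Pgr 0 0) ∧
            δ 0 (y j : Pr 1) = ∑ l, e l • x l := by
        intro j
        have hy1 : δ 0 (y j : Pr 1) ∈ Pgr 0 1 := hδgr 0 1 _ (y j).2
        have hspan : δ 0 (y j : Pr 1) ∈ Submodule.span A ((Pgr 0 0 : Set (Pr 0))) := by
          have hg0 : Submodule.span A ((Pgr 0 0 : Set (Pr 0))) = ⊤ := by
            simpa using hgen 0
          rw [hg0]; trivial
        rw [Submodule.mem_span_set'] at hspan
        obtain ⟨kk, e, x, hsum2⟩ := hspan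
        refine ⟨kk, fun l => gcomp 𝒜 1 (e l), fun l => (x l : Pr 0),
          fun l => gcomp_mem _ _ _, fun l => (x l).2, ?_⟩
        calc δ 0 (y j : Pr 1) = gcomp (Pgr 0) 1 (δ 0 (y j : Pr 1)) :=
              (gcomp_of_mem_same (Pgr 0) hy1).symm
          _ = ∑ l, gcomp (Pgr 0) 1 ((e l) • (x l : Pr 0)) := by rw [← hsum2, map_sum]
          _ = ∑ l, gcomp 𝒜 1 (e l) • (x l : Pr 0) := by
              apply Finset.sum_congr rfl
              intro l _
              have := gcomp_smul_homog 𝒜 (Pgr 0) (hPgrs 0) (e := 0) 1 (e l) (x l).2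
              rw [← this]
              norm_num
      choose kk e x he hx hsum2 using hyd
      -- put everything together : `a = ∑ j ∑ l, b'_j * e_{jl} * t_{jl}`
      have ha2 : a = ∑ j, ∑ l, gcomp 𝒜 ((m + 1 : ℕ) : ℤ) (b j) *
          (e j l * εt (x j l)) := by
        have h5 : εt (a • u) = a := by rw [hεtsmul, hεtu, smul_eq_mul, mul_one]
        calc a = εt (a • u) := h5.symm
          _ = εt (δ 0 q') := by rw [hδ0q']
          _ = ∑ j, gcomp 𝒜 ((m + 1 : ℕ) : ℤ) (b j) • εt (δ 0 (y j : Pr 1)) := by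
              rw [hq'', map_sum, map_sum]
              apply Finset.sum_congr rfl
              intro j _
              rw [map_smul, hεtsmul]
          _ = ∑ j, ∑ l, gcomp 𝒜 ((m + 1 : ℕ) : ℤ) (b j) * (e j l * εt (x j l)) := by
              apply Finset.sum_congr rfl
              intro j _
              rw [hsum2 j, map_sum, Finset.smul_sum]
              apply Finset.sum_congr rfl
              intro l _
              rw [hεtsmul, smul_eq_mul, smul_eq_mul]
      -- lift the homogeneous coefficients
      have hlift : ∀ j : Fin (nn), ∃ z ∈ (Fw (m + 1) : Submodule K (FreeAlgebra K G)),
          π z = gcomp 𝒜 ((m + 1 : ℕ) : ℤ) (b j) := by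
        intro j
        exact ih (m + 1) (by omega) _ (gcomp_mem _ _ _)
      choose z hz hπz using hlift
      refine ⟨∑ j, z j * ∑ l, FreeAlgebra.ι K (Sum.inr ⟨e j l, he j l⟩ : G) *
        FreeAlgebra.ι K (Sum.inl ⟨εt (x j l), hεtmem (hx j l)⟩ : G), ?_, ?_⟩
      · apply Submodule.sum_mem
        intro j _
        have h6 : (m + 2) = (m + 1) + 1 := by omega
        rw [h6]
        apply mul_mem_Fw (hz j)
        apply Submodule.sum_mem
        intro l _
        have h7 : (1 : ℕ) = 1 + 0 := rfl
        rw [h7]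
        exact mul_mem_Fw (ι_inr_mem_Fw1 _) (ι_inl_mem_Fw0 _)
      · rw [map_sum, ha2]
        apply Finset.sum_congr rfl
        intro j _
        rw [map_mul, hπz j, map_sum, Finset.mul_sum]
        apply Finset.sum_congr rfl
        intro l _
        rw [map_mul, hπinr, hπinl]
  -- surjectivity of `π`
  have hsurj : Function.Surjective π := by
    intro a
    obtain ⟨s, hs⟩ := gcomp_sum 𝒜 a
    have hex : ∀ d : ℤ, ∃ x, π x = gcomp 𝒜 d a := by
      intro d
      rcases lt_or_ge d 0 with hd | hd
      · refine ⟨0, ?_⟩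
        have hm := gcomp_mem 𝒜 d a
        rw [hpos d hd] at hm
        simp only [Submodule.mem_bot] at hm
        rw [map_zero, hm]
      · have hcast : ((d.toNat : ℕ) : ℤ) = d := Int.toNat_of_nonneg hd
        obtain ⟨x, _, hx⟩ := genA d.toNat (gcomp 𝒜 d a) (by rw [hcast]; exact gcomp_mem 𝒜 d a)
        exact ⟨x, hx⟩
    choose xs hxs using hex
    refine ⟨∑ d ∈ s, xs d, ?_⟩
    rw [map_sum]
    rw [hs]
    exact Finset.sum_congr rfl fun d _ => hxs d
  -- ## The free module `C1` on a basis of `A_1` and the map `d1`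
  set bb := Module.Basis.ofVectorSpace K ↥(𝒜 1) with hbb
  set ib := ↥(Module.Basis.ofVectorSpaceIndex K ↥(𝒜 1)) with hib
  set v : ib → A := fun i => ((bb i : ↥(𝒜 1)) : A) with hv
  have hv1 : ∀ i, v i ∈ 𝒜 1 := fun i => (bb i).2
  set d1 : (ib →₀ A) →ₗ[A] A := Finsupp.linearCombination A v with hd1
  have hd1single : ∀ (i : ib) (a : A), d1 (Finsupp.single i a) = a * v i := by
    intro i a
    rw [hd1, Finsupp.linearCombination_single, smul_eq_mul]
  -- expansion of an element of `𝒜 1` in the basis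
  have hbasis : ∀ vc : ↥(𝒜 1), (vc : A) =
      ∑ i ∈ (bb.repr vc).support, (bb.repr vc) i • v i := by
    intro vc
    conv_lhs => rw [← bb.linearCombination_repr vc]
    rw [Finsupp.linearCombination_apply, Finsupp.sum, AddSubmonoidClass.coe_finset_sum]
    exact Finset.sum_congr rfl fun i _ => by rw [SetLike.val_smul]
  -- the image under `π` of positive-weight elements lies in `A · A_1`
  have hπvspan : ∀ (w' : ℕ) {x : FreeAlgebra K G}, x ∈ (Fw (w' + 1) : Submodule K _) →
      π x ∈ Submodule.span A (Set.range v) := by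
    intro w' x hx
    induction hx using Submodule.span_induction with
    | mem zz hz =>
      obtain ⟨l, hl, rfl⟩ := hz
      obtain ⟨l₁, g, l₂, rfl, hg, hc1, hc2⟩ := list_split_last hl
      cases g with
      | inl xx => simp at hg
      | inr vv =>
        rw [List.map_append, List.prod_append, List.map_cons, List.prod_cons, map_mul,
          map_mul, hπinr]
        have hc0m : π ((l₂.map (FreeAlgebra.ι K)).prod) ∈ 𝒜 0 := by
          have hpw := pi_word 𝒜 h1 hmul
            (Sum.elim (fun a : ↥(𝒜 0) => (a : A)) fun a : ↥(𝒜 1) => (a : A))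
            (fun a => a.2) (fun a => a.2) l₂
          rw [hc2] at hpw
          simpa [hπdef] using hpw
        have hvc : (vv : A) * π ((l₂.map (FreeAlgebra.ι K)).prod) ∈ 𝒜 1 := by
          simpa using hmul 1 0 _ vv.2 _ hc0m
        rw [show ((vv : A) * π ((l₂.map (FreeAlgebra.ι K)).prod)) = ((⟨_, hvc⟩ : ↥(𝒜 1)) : A)
          from rfl, hbasis ⟨_, hvc⟩, Finset.mul_sum]
        apply Submodule.sum_mem
        intro i _
        rw [mul_smul_comm, ← algebraMap_smul A ((bb.repr ⟨_, hvc⟩) i)]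
        apply Submodule.smul_mem
        rw [← smul_eq_mul]
        exact Submodule.smul_mem _ _ (Submodule.subset_span ⟨i, rfl⟩)
    | zero => rw [map_zero]; exact Submodule.zero_mem _
    | add aa bbq ha hb hha hhb => rw [map_add]; exact Submodule.add_mem _ hha hhb
    | smul c aa ha hha =>
      rw [map_smul, ← algebraMap_smul A c]
      exact Submodule.smul_mem _ _ hha
  -- the range of `d1` is exactly the positive ideal
  have hranged1 : LinearMap.range d1 = (posIdeal K A 𝒜 : Submodule A A) := by
    rw [hd1, Finsupp.range_linearCombination]
    apply le_antisymm
    · rw [Submodule.span_le]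
      rintro z ⟨i, rfl⟩
      exact hposmem (by norm_num) (hv1 i)
    · apply Ideal.span_le.mpr
      rintro z ⟨d, hd, hz⟩
      have hd1' : 1 ≤ d.toNat := by omega
      obtain ⟨x, hxw, hπx⟩ := genA d.toNat z (by
        rw [Int.toNat_of_nonneg (by omega)]; exact hz)
      obtain ⟨w', hw'⟩ : ∃ w', d.toNat = w' + 1 := ⟨d.toNat - 1, by omega⟩
      rw [← hπx]
      exact hπvspan w' (hw' ▸ hxw)
  -- ## the comparison maps `f1 : C1 → P¹` and `g1 : P¹ → C1`
  have hpex : ∀ i : ib, ∃ pp : Pr 1, pp ∈ Pgr 1 1 ∧ δ 0 pp = v i • u := by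
    intro i
    have hvm : εm (v i • u) = 0 := by
      rw [map_smul, hεmu, ← Submodule.Quotient.mk_smul, smul_eq_mul, mul_one,
        Submodule.Quotient.mk_eq_zero]
      exact hposmem (by norm_num) (hv1 i)
    obtain ⟨q, hq⟩ : v i • u ∈ LinearMap.range (δ 0) := by rw [← hexact0]; exact hvm
    have hviu : v i • u ∈ Pgr 0 1 := by
      have := hPgrs 0 1 0 (v i) (hv1 i) u hu0
      simpa using this
    refine ⟨gcomp (Pgr 1) 1 q, gcomp_mem _ _ _, ?_⟩
    have hcomm := gcomp_comm (Pgr 1) (Pgr 0) (δ 0).toAddMonoidHom (hδgr 0) 1 q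
    simp only [LinearMap.toAddMonoidHom_coe] at hcomm
    rw [hcomm, hq]
    exact gcomp_of_mem_same (Pgr 0) hviu
  choose pgen hpgen1 hpgenδ using hpex
  set f1 : (ib →₀ A) →ₗ[A] Pr 1 := Finsupp.linearCombination A pgen with hf1
  have hf1single : ∀ (i : ib) (a : A), f1 (Finsupp.single i a) = a • pgen i := by
    intro i a; rw [hf1, Finsupp.linearCombination_single]
  have hf1δ : ∀ k, δ 0 (f1 k) = d1 k • u := by
    intro k
    induction k using Finsupp.induction_linear with
    | zero => simp
    | add f g hf hg => rw [map_add, map_add, map_add, add_smul, hf, hg]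
    | single i a => rw [hf1single, hd1single, map_smul, hpgenδ i, smul_smul]
  have hf1mem : ∀ {e : ℤ} (k : ib →₀ A), (∀ i, k i ∈ 𝒜 e) → f1 k ∈ Pgr 1 (e + 1) := by
    intro e k hk
    rw [hf1, Finsupp.linearCombination_apply, Finsupp.sum]
    apply Submodule.sum_mem
    intro i _
    exact hPgrs 1 e 1 (k i) (hk i) (pgen i) (hpgen1 i)
  -- the lift `g1'` from projectivity of `P¹`
  have hd1mem : ∀ k, d1 k ∈ posIdeal K A 𝒜 := fun k => by
    rw [show (posIdeal K A 𝒜 : Submodule A A) = LinearMap.range d1 from hranged1.symm]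
    exact LinearMap.mem_range_self _ k
  set d1c : (ib →₀ A) →ₗ[A] ↥(posIdeal K A 𝒜) :=
    LinearMap.codRestrict _ d1 hd1mem with hd1c
  have hd1csurj : Function.Surjective d1c := by
    rintro ⟨yy, hyy⟩
    rw [show (posIdeal K A 𝒜 : Submodule A A) = LinearMap.range d1 from hranged1.symm] at hyy
    obtain ⟨k, hk⟩ := hyy
    exact ⟨k, Subtype.ext hk⟩
  set εtL : Pr 0 →ₗ[A] A :=
    { toFun := εt, map_add' := fun x y => map_add εt x y, map_smul' := hεtsmul } with hεtL
  have hδεpos : ∀ x : Pr 1, εt (δ 0 x) ∈ posIdeal K A 𝒜 := by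
    intro x
    rw [← Submodule.Quotient.mk_eq_zero (posIdeal K A 𝒜), hεtmk]
    have hx : δ 0 x ∈ LinearMap.ker εm := by
      rw [hexact0]; exact LinearMap.mem_range_self _ x
    exact hx
  obtain ⟨g1', hg1'⟩ := by
    letI := hPproj 1
    exact Module.projective_lifting_property d1c
      (LinearMap.codRestrict _ (εtL ∘ₗ δ 0) (fun x => hδεpos x)) hd1csurj
  have hg1'app : ∀ x, d1 (g1' x) = εt (δ 0 x) := by
    intro x
    have h := congrArg Subtype.val (LinearMap.congr_fun hg1' x)
    simp [hd1c] at h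
    exact h
  -- the coordinatewise projections on `C1`
  set pC : ℤ → (ib →₀ A) →ₗ[K] (ib →₀ A) :=
    fun w => Finsupp.mapRange.linearMap (gcomp 𝒜 (w - 1)) with hpC
  have hpCapply : ∀ (w : ℤ) (k : ib →₀ A) (i : ib), pC w k i = gcomp 𝒜 (w - 1) (k i) := by
    intro w k i
    rw [hpC]
    simp
  have hpCsingle : ∀ (w : ℤ) (i : ib) (a : A),
      pC w (Finsupp.single i a) = Finsupp.single i (gcomp 𝒜 (w - 1) a) := by
    intro w i a
    ext j
    rw [hpCapply]
    rcases eq_or_ne i j with rfl | hij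
    · rw [Finsupp.single_eq_same, Finsupp.single_eq_same]
    · rw [Finsupp.single_eq_of_ne hij.symm, Finsupp.single_eq_of_ne hij.symm, map_zero]
  have hpCsm : ∀ (d e : ℤ) (a : A), a ∈ 𝒜 d → ∀ n : ib →₀ A,
      pC (d + e) (a • n) = a • pC e n := by
    intro d e a ha n
    ext i
    simp only [hpCapply, Finsupp.smul_apply, smul_eq_mul]
    have h := gcomp_smul_left 𝒜 𝒜 hsmA (e - 1) ha (n i)
    rw [smul_eq_mul, smul_eq_mul] at h
    rw [show d + e - 1 = d + (e - 1) by ring, h]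
  -- the graded comparison map `g1`
  set g1 : Pr 1 →ₗ[K] (ib →₀ A) := gradedPart (Pgr 1) pC (g1'.restrictScalars K) with hg1def
  have hg1hom : ∀ {d : ℤ} {x : Pr 1}, x ∈ Pgr 1 d → g1 x = pC d (g1' x) :=
    fun {d x} hx => gradedPart_apply_of_mem _ _ _ hx
  have hg1smul : ∀ (a : A) (x : Pr 1), g1 (a • x) = a • g1 x :=
    gradedPart_smul 𝒜 (Pgr 1) (hPgrs 1) _ _ hpCsm (fun a x => by
      rw [LinearMap.restrictScalars_apply, LinearMap.restrictScalars_apply, map_smul])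
  set g1L : Pr 1 →ₗ[A] (ib →₀ A) :=
    { toFun := g1, map_add' := fun x y => map_add g1 x y, map_smul' := hg1smul } with hg1L
  have hd1pC : ∀ (w : ℤ) (k : ib →₀ A), d1 (pC w k) = gcomp 𝒜 w (d1 k) := by
    intro w k
    induction k using Finsupp.induction_linear with
    | zero => simp
    | add f g hf hg => rw [map_add, map_add, map_add, map_add, hf, hg]
    | single i a =>
      rw [hpCsingle, hd1single, hd1single]
      have h := gcomp_smul_homog 𝒜 𝒜 hsmA (w - 1) a (hv1 i)
      rw [smul_eq_mul, smul_eq_mul, show w - 1 + 1 = w by ring] at h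
      exact h.symm
  have hg1d1 : ∀ x : Pr 1, d1 (g1 x) = εt (δ 0 x) := by
    intro x
    induction x using decomp_induction (Pgr 1) with
    | h0 => rw [map_zero, map_zero, map_zero, map_zero]
    | hhom d x hx =>
      rw [hg1hom hx, hd1pC, hg1'app]
      exact gcomp_of_mem_same 𝒜 (hεtmem (hδgr 0 d x hx))
    | hadd x y hx hy => rw [map_add, map_add, map_add, map_add, hx, hy]
  have hg1coords : ∀ {d : ℤ} {x : Pr 1}, x ∈ Pgr 1 d → ∀ i, g1 x i ∈ 𝒜 (d - 1) := by
    intro d x hx i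
    rw [hg1hom hx, hpCapply]
    exact gcomp_mem _ _ _
  -- the defect map `ψ = id - g1 ∘ f1`
  set ψ : (ib →₀ A) →ₗ[A] (ib →₀ A) := LinearMap.id - g1L ∘ₗ f1 with hψ
  have hψapply : ∀ k, ψ k = k - g1 (f1 k) := by
    intro k
    rw [hψ]
    simp only [LinearMap.sub_apply, LinearMap.id_apply, LinearMap.comp_apply]
    rfl
  have hd1ψ : ∀ k, d1 (ψ k) = 0 := by
    intro k
    rw [hψapply, map_sub, hg1d1, hf1δ, hεtsmul, hεtu, smul_eq_mul, mul_one, sub_self]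
  -- ## the key structural lemma: homogeneous relations decompose into low-degree ones
  set Sset : ℕ → Set (ib →₀ A) := fun w =>
    {x | ∃ (d : ℕ) (aa : A) (κ : ib →₀ A), (d = 1 ∨ d = 2) ∧ aa ∈ 𝒜 ((w : ℤ) - d) ∧
      (∀ i, κ i ∈ 𝒜 ((d : ℤ) - 1)) ∧ d1 κ = 0 ∧ x = aa • κ} with hSset
  have keyK : ∀ (w : ℕ), 3 ≤ w → ∀ k : ib →₀ A, (∀ i, k i ∈ 𝒜 ((w : ℤ) - 1)) →
      d1 k = 0 → k ∈ Submodule.span K (Sset w) := by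
    intro w hw k hk hdk
    have hsplit : k = g1 (f1 k) + ψ k := by rw [hψapply]; abel
    rw [hsplit]
    apply Submodule.add_mem
    · -- the `g1 ∘ f1` part, controlled by `P²`
      have hf1k : f1 k ∈ Pgr 1 (w : ℤ) := by
        have h := hf1mem k hk
        rw [show ((w:ℤ) - 1) + 1 = (w:ℤ) by ring] at h
        exact h
      have hker : f1 k ∈ LinearMap.range (δ 1) := by
        rw [← hexact 0, LinearMap.mem_ker, hf1δ, hdk, zero_smul]
      obtain ⟨q, hq⟩ := hker
      have hδ1q' : δ 1 (gcomp (Pgr 2) (w:ℤ) q) = f1 k := by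
        have hcomm := gcomp_comm (Pgr 2) (Pgr 1) (δ 1).toAddMonoidHom (hδgr 1) (w:ℤ) q
        simp only [LinearMap.toAddMonoidHom_coe] at hcomm
        rw [hcomm, hq]
        exact gcomp_of_mem_same (Pgr 1) hf1k
      set q' := gcomp (Pgr 2) (w:ℤ) q with hq'def
      have hq'span : q' ∈ Submodule.span A ((Pgr 2 2 : Set (Pr 2))) := by
        have hg2 : Submodule.span A ((Pgr 2 2 : Set (Pr 2))) = ⊤ := by simpa using hgen 2
        rw [hg2]; trivial
      rw [Submodule.mem_span_set'] at hq'span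
      obtain ⟨nn, b, z, hsum⟩ := hq'span
      have hq'' : q' = ∑ j, (gcomp 𝒜 ((w:ℤ) - 2) (b j)) • (z j : Pr 2) := by
        calc q' = gcomp (Pgr 2) (w:ℤ) q' := (gcomp_of_mem_same (Pgr 2) (gcomp_mem _ _ _)).symm
          _ = ∑ j, gcomp (Pgr 2) (w:ℤ) ((b j) • (z j : Pr 2)) := by rw [← hsum, map_sum]
          _ = _ := by
              apply Finset.sum_congr rfl
              intro j _
              have h8 := gcomp_smul_homog 𝒜 (Pgr 2) (hPgrs 2) ((w:ℤ) - 2) (b j) (z j).2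
              rw [show ((w:ℤ) - 2) + 2 = (w:ℤ) by ring] at h8
              exact h8
      have hexpand : g1 (f1 k) = ∑ j, (gcomp 𝒜 ((w:ℤ) - 2) (b j)) • g1 ((δ 1) (z j : Pr 2)) := by
        rw [← hδ1q']
        conv_lhs => rw [hq'']
        rw [map_sum, map_sum]
        apply Finset.sum_congr rfl
        intro j _
        rw [map_smul, hg1smul]
      rw [hexpand]
      apply Submodule.sum_mem
      intro j _
      apply Submodule.subset_span
      refine ⟨2, gcomp 𝒜 ((w:ℤ) - 2) (b j), g1 ((δ 1) (z j : Pr 2)), Or.inr rfl,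
        by exact_mod_cast gcomp_mem _ _ _, ?_, ?_, rfl⟩
      · intro i
        have h9 := hg1coords (hδgr 1 2 _ (z j).2) i
        have : ((2:ℕ):ℤ) - 1 = 2 - 1 := by norm_num
        rw [this]
        exact h9
      · rw [hg1d1]
        have hz0 : δ 0 (δ 1 (z j : Pr 2)) = 0 := by
          have hm : δ 1 (z j : Pr 2) ∈ LinearMap.ker (δ 0) := by
            rw [hexact 0]; exact LinearMap.mem_range_self _ _
          exact hm
        rw [hz0, map_zero]
    · -- the `ψ` part
      have hkexp : k = ∑ i ∈ k.support, (k i) • Finsupp.single i (1:A) := by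
        conv_lhs => rw [← Finsupp.sum_single k]
        rw [Finsupp.sum]
        apply Finset.sum_congr rfl
        intro i _
        rw [Finsupp.smul_single, smul_eq_mul, mul_one]
      have hψexp : ψ k = ∑ i ∈ k.support, (k i) • ψ (Finsupp.single i 1) := by
        conv_lhs => rw [hkexp]
        rw [map_sum]
        exact Finset.sum_congr rfl fun i _ => map_smul ψ _ _
      rw [hψexp]
      apply Submodule.sum_mem
      intro i _
      apply Submodule.subset_span
      refine ⟨1, k i, ψ (Finsupp.single i 1), Or.inl rfl, ?_, ?_, hd1ψ _, rfl⟩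
      · have : ((w:ℤ) - ((1:ℕ):ℤ)) = (w:ℤ) - 1 := by norm_num
        rw [this]
        exact hk i
      · intro j
        rw [hψapply]
        have hsc : (Finsupp.single i (1:A)) j ∈ 𝒜 0 := by
          rcases eq_or_ne i j with rfl | hij
          · rw [Finsupp.single_eq_same]; exact h1
          · rw [Finsupp.single_eq_of_ne hij.symm]; exact (𝒜 0).zero_mem
        have hmem1 : f1 (Finsupp.single i 1) ∈ Pgr 1 1 := by
          rw [hf1single, one_smul]; exact hpgen1 i
        have hgc : g1 (f1 (Finsupp.single i 1)) j ∈ 𝒜 0 := by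
          have := hg1coords hmem1 j
          norm_num at this
          exact this
        have : ((1:ℕ):ℤ) - 1 = 0 := by norm_num
        rw [this, Finsupp.sub_apply]
        exact sub_mem hsc hgc
  -- ## the two-sided ideal of low-weight relations
  set genset : Set (FreeAlgebra K G) :=
    {x : FreeAlgebra K G |
      x ∈ Submodule.span K
        {z : FreeAlgebra K G |
          ∃ lw : List G, lw.countP (fun g => g.isRight) ≤ 2 ∧
            z = (lw.map (FreeAlgebra.ι K)).prod} ∧ π x = 0} with hgensetdef
  set Rt : TwoSidedIdeal (FreeAlgebra K G) := TwoSidedIdeal.span genset with hRtdef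
  have hRker : ∀ x ∈ Rt, π x = 0 := by
    intro x hx
    have h := TwoSidedIdeal.mem_span_iff.mp hx (TwoSidedIdeal.ker π)
      (fun z hz => (TwoSidedIdeal.mem_ker π).mpr hz.2)
    exact (TwoSidedIdeal.mem_ker π).mp h
  have hFwlow : ∀ {w : ℕ}, w ≤ 2 → (Fw w : Submodule K (FreeAlgebra K G)) ≤
      Submodule.span K {z : FreeAlgebra K G |
        ∃ lw : List G, lw.countP (fun g => g.isRight) ≤ 2 ∧
          z = (lw.map (FreeAlgebra.ι K)).prod} := by
    intro w hw
    apply Submodule.span_mono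
    rintro z ⟨l, hl, rfl⟩
    exact ⟨l, le_trans (le_of_eq hl) hw, rfl⟩
  have hRlow : ∀ {w : ℕ}, w ≤ 2 → ∀ x ∈ (Fw w : Submodule K (FreeAlgebra K G)),
      π x = 0 → x ∈ Rt := by
    intro w hw x hxw hπx
    exact TwoSidedIdeal.subset_span ⟨hFwlow hw hxw, hπx⟩
  set Rsub : Submodule K (FreeAlgebra K G) :=
    { carrier := {x | x ∈ Rt}
      add_mem' := fun ha hb => Rt.add_mem ha hb
      zero_mem' := Rt.zero_mem
      smul_mem' := fun c x hx => by
        simp only [Set.mem_setOf_eq] at *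
        rw [Algebra.smul_def]
        exact Rt.mul_mem_left _ _ hx } with hRsub
  -- ## the main descent: homogeneous relations lie in `Rt`
  have main : ∀ w : ℕ, ∀ x ∈ (Fw w : Submodule K (FreeAlgebra K G)), π x = 0 → x ∈ Rt := by
    intro w
    induction w using Nat.strong_induction_on with
    | _ w ihw =>
    intro x hxw hπx
    by_cases hw2 : w ≤ 2
    · exact hRlow hw2 x hxw hπx
    push_neg at hw2
    have hw3 : 3 ≤ w := hw2
    -- ### step 1 : peel off the rightmost `A_1` letter
    have hstep1 : (Fw w : Submodule K (FreeAlgebra K G)) ≤ Rsub ⊔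
        ⨆ i : ib, (Fw (w-1) : Submodule K (FreeAlgebra K G)).map
          (LinearMap.mulRight K (FreeAlgebra.ι K (Sum.inr (bb i) : G))) := by
      rw [Fw, Submodule.span_le]
      rintro z ⟨l, hl, rfl⟩
      obtain ⟨w', hww⟩ : ∃ w', w = w' + 1 := ⟨w - 1, by omega⟩
      obtain ⟨l₁, g, l₂, rfl, hg, hc1, hc2⟩ := list_split_last (by rw [hl, hww])
      cases g with
      | inl xx => simp at hg
      | inr vv =>
        rw [List.map_append, List.prod_append, List.map_cons, List.prod_cons]
        have hc0m : π ((l₂.map (FreeAlgebra.ι K)).prod) ∈ 𝒜 0 := by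
          have hpw := pi_word 𝒜 h1 hmul
            (Sum.elim (fun a : ↥(𝒜 0) => (a : A)) fun a : ↥(𝒜 1) => (a : A))
            (fun a => a.2) (fun a => a.2) l₂
          rw [hc2] at hpw
          simpa [hπdef] using hpw
        have hvc : (vv : A) * π ((l₂.map (FreeAlgebra.ι K)).prod) ∈ 𝒜 1 := by
          simpa using hmul 1 0 _ vv.2 _ hc0m
        set vc : ↥(𝒜 1) := ⟨_, hvc⟩ with hvcdef
        set y : FreeAlgebra K G := FreeAlgebra.ι K (Sum.inr vv : G) *
            (l₂.map (FreeAlgebra.ι K)).prod -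
          ∑ i ∈ (bb.repr vc).support, (bb.repr vc) i •
            FreeAlgebra.ι K (Sum.inr (bb i) : G) with hy
        have hyR : y ∈ Rt := by
          apply TwoSidedIdeal.subset_span
          constructor
          · apply Submodule.sub_mem
            · apply Submodule.subset_span
              refine ⟨Sum.inr vv :: l₂, ?_, by rw [List.map_cons, List.prod_cons]⟩
              rw [List.countP_cons]
              rw [hc2]; simp
            · apply Submodule.sum_mem
              intro i _
              apply Submodule.smul_mem
              apply Submodule.subset_span
              exact ⟨[Sum.inr (bb i)], by norm_num, by simp⟩
          · rw [map_sub, map_mul, hπinr, map_sum]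
            have hb2 : ∀ i, π ((bb.repr vc) i • FreeAlgebra.ι K (Sum.inr (bb i) : G)) =
                (bb.repr vc) i • v i := by
              intro i
              rw [map_smul, hπinr]
            rw [Finset.sum_congr rfl fun i _ => hb2 i, ← hbasis vc]
            exact sub_self _
        have hP1 : (l₁.map (FreeAlgebra.ι K)).prod ∈ (Fw (w-1) : Submodule K _) :=
          word_mem_Fw (by rw [hc1]; omega)
        have hkey : (l₁.map (FreeAlgebra.ι K)).prod *
            (FreeAlgebra.ι K (Sum.inr vv : G) * (l₂.map (FreeAlgebra.ι K)).prod) =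
            (l₁.map (FreeAlgebra.ι K)).prod * y +
            ∑ i ∈ (bb.repr vc).support, (bb.repr vc) i •
              ((l₁.map (FreeAlgebra.ι K)).prod * FreeAlgebra.ι K (Sum.inr (bb i) : G)) := by
          rw [hy, mul_sub, Finset.mul_sum]
          simp_rw [mul_smul_comm]
          rw [sub_add_cancel]
        rw [hkey]
        apply Submodule.add_mem
        · exact Submodule.mem_sup_left (Rt.mul_mem_left _ _ hyR)
        · apply Submodule.mem_sup_right
          apply Submodule.sum_mem
          intro i _
          apply Submodule.smul_mem
          apply Submodule.mem_iSup_of_mem i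
          exact ⟨_, hP1, rfl⟩
    -- ### step 2 : extract the decomposition x = r + Σ yᵢ * ιᵢ
    have hx2 := hstep1 hxw
    rw [Submodule.mem_sup] at hx2
    obtain ⟨r, hr, mm, hmm, hxeq⟩ := hx2
    rw [Submodule.mem_iSup_iff_exists_finsupp] at hmm
    obtain ⟨ff, hff, hffsum⟩ := hmm
    have hychoice : ∀ i : ib, ∃ y, y ∈ (Fw (w-1) : Submodule K (FreeAlgebra K G)) ∧
        y * FreeAlgebra.ι K (Sum.inr (bb i) : G) = ff i := by
      intro i
      obtain ⟨y, hy, hy2⟩ := hff i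
      exact ⟨y, hy, hy2⟩
    choose yy hyyF hyyE using hychoice
    -- ### step 3 : the relation coefficient vector `k`
    set k : ib →₀ A := ∑ i ∈ ff.support, Finsupp.single i (π (yy i)) with hkdef
    have hki : ∀ j, k j = if j ∈ ff.support then π (yy j) else 0 := by
      intro j
      rw [hkdef, Finsupp.finset_sum_apply]
      rw [Finset.sum_congr rfl (fun i _ => Finsupp.single_apply)]
      exact Finset.sum_ite_eq' ff.support j (fun i => π (yy i))
    have hπmm : π mm = d1 k := by
      have h1' : π mm = ∑ i ∈ ff.support, π (yy i) * v i := by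
        rw [← hffsum, Finsupp.sum, map_sum]
        apply Finset.sum_congr rfl
        intro i _
        rw [← hyyE i, map_mul, hπinr]
      rw [h1', hkdef, map_sum]
      exact (Finset.sum_congr rfl (fun i _ => by rw [hd1single])).symm
    have hπr : π r = 0 := hRker r hr
    have hd1k : d1 k = 0 := by
      rw [← hπmm]
      have h2 : π r + π mm = 0 := by rw [← map_add, hxeq, hπx]
      rw [hπr, zero_add] at h2
      exact h2
    have hkmem : ∀ j, k j ∈ 𝒜 ((w:ℤ) - 1) := by
      intro j
      have hcast : (((w-1:ℕ)):ℤ) = (w:ℤ) - 1 := by omega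
      rw [hki]
      split
      · rw [← hcast]; exact hπFw (hyyF j)
      · exact Submodule.zero_mem _
    -- ### step 4 : apply the key lemma and extract a finite decomposition
    have hkspan := keyK w hw3 k hkmem hd1k
    rw [Submodule.mem_span_set'] at hkspan
    obtain ⟨N, cc, gg, hgsum⟩ := hkspan
    have hggS : ∀ m : Fin N, ∃ (d : ℕ) (aa : A) (κ : ib →₀ A), (d = 1 ∨ d = 2) ∧
        aa ∈ 𝒜 ((w : ℤ) - d) ∧ (∀ i, κ i ∈ 𝒜 ((d : ℤ) - 1)) ∧ d1 κ = 0 ∧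
        (gg m : ib →₀ A) = aa • κ := fun m => (gg m).2
    choose dd aav κκ hdd haav hκκ hκd1 hggeq using hggS
    set aa' : Fin N → A := fun m => cc m • aav m with haa'
    have haa'mem : ∀ m, aa' m ∈ 𝒜 ((w:ℤ) - dd m) := fun m => Submodule.smul_mem _ _ (haav m)
    have hksum : k = ∑ m, aa' m • κκ m := by
      rw [← hgsum]
      apply Finset.sum_congr rfl
      intro m _
      rw [hggeq m, haa']
      exact (smul_assoc (cc m) (aav m) (κκ m)).symm
    -- ### step 5 : lift the pieces to the free algebra
    have hlifts : ∀ m : Fin N, ∃ (Z : FreeAlgebra K G) (W : ib → FreeAlgebra K G) (dW : ℕ),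
        dW ≤ 1 ∧ Z ∈ (Fw (w - 1 - dW) : Submodule K _) ∧ π Z = aa' m ∧
        (∀ i, W i ∈ (Fw dW : Submodule K _)) ∧ (∀ i, π (W i) = κκ m i) := by
      intro m
      rcases hdd m with h1' | h2'
      · have hκ0 : ∀ i, κκ m i ∈ 𝒜 0 := by
          intro i
          have h := hκκ m i
          rw [h1'] at h
          norm_num at h
          exact h
        have haa1 : aa' m ∈ 𝒜 (((w - 1 : ℕ)) : ℤ) := by
          have h := haa'mem m
          rw [h1'] at h
          have hcast : ((w - 1 : ℕ) : ℤ) = (w:ℤ) - ((1:ℕ):ℤ) := by omega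
          rw [hcast]
          exact h
        obtain ⟨Z, hZ, hπZ⟩ := genA (w - 1) (aa' m) haa1
        refine ⟨Z, fun i => FreeAlgebra.ι K (Sum.inl ⟨κκ m i, hκ0 i⟩ : G), 0, by norm_num,
          ?_, hπZ, fun i => ι_inl_mem_Fw0 _, fun i => hπinl _⟩
        rw [show w - 1 - 0 = w - 1 from rfl]
        exact hZ
      · have hκ1 : ∀ i, κκ m i ∈ 𝒜 1 := by
          intro i
          have h := hκκ m i
          rw [h2'] at h
          norm_num at h
          exact h
        have haa2 : aa' m ∈ 𝒜 (((w - 2 : ℕ)) : ℤ) := by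
          have h := haa'mem m
          rw [h2'] at h
          have hcast : ((w - 2 : ℕ) : ℤ) = (w:ℤ) - ((2:ℕ):ℤ) := by omega
          rw [hcast]
          exact h
        obtain ⟨Z, hZ, hπZ⟩ := genA (w - 2) (aa' m) haa2
        refine ⟨Z, fun i => FreeAlgebra.ι K (Sum.inr ⟨κκ m i, hκ1 i⟩ : G), 1, le_refl 1,
          ?_, hπZ, fun i => ι_inr_mem_Fw1 _, fun i => hπinr _⟩
        rw [show w - 1 - 1 = w - 2 by omega]
        exact hZ
    choose ZZ WW dW hdW hZF hZπ hWF hWπ using hlifts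
    -- ### step 6 : reassemble
    set T : Finset ib := ff.support ∪ Finset.univ.biUnion (fun m : Fin N => (κκ m).support)
      with hT
    set yy' : ib → FreeAlgebra K G := fun i => if i ∈ ff.support then yy i else 0 with hyy'
    have hyy'F : ∀ i, yy' i ∈ (Fw (w-1) : Submodule K (FreeAlgebra K G)) := by
      intro i
      simp only [hyy']
      split
      · exact hyyF i
      · exact Submodule.zero_mem _
    have hπyy' : ∀ i, π (yy' i) = k i := by
      intro i
      simp only [hyy', hki]
      split
      · rfl
      · rw [map_zero]
    have hmmT : mm = ∑ i ∈ T, yy' i * FreeAlgebra.ι K (Sum.inr (bb i) : G) := by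
      have e1 : mm = ∑ i ∈ ff.support, yy' i * FreeAlgebra.ι K (Sum.inr (bb i) : G) := by
        rw [← hffsum, Finsupp.sum]
        apply Finset.sum_congr rfl
        intro i hi
        simp only [hyy']
        rw [if_pos hi, hyyE i]
      rw [e1]
      apply Finset.sum_subset Finset.subset_union_left
      intro i _ hi
      simp only [hyy']
      rw [if_neg hi, zero_mul]
    have hκsupp : ∀ m : Fin N, (κκ m).support ⊆ T := by
      intro m
      refine Finset.Subset.trans ?_ Finset.subset_union_right
      intro i hi
      exact Finset.mem_biUnion.mpr ⟨m, Finset.mem_univ m, hi⟩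
    have hinnerR : ∀ m : Fin N,
        (∑ i ∈ T, WW m i * FreeAlgebra.ι K (Sum.inr (bb i) : G)) ∈ Rt := by
      intro m
      apply TwoSidedIdeal.subset_span
      constructor
      · apply Submodule.sum_mem
        intro i _
        have h := mul_mem_Fw (hWF m i) (ι_inr_mem_Fw1 (bb i))
        exact hFwlow (by have := hdW m; omega) h
      · rw [map_sum]
        have e2 : ∀ i ∈ T, π (WW m i * FreeAlgebra.ι K (Sum.inr (bb i) : G)) =
            κκ m i * v i := by
          intro i _
          rw [map_mul, hWπ m i, hπinr]
        rw [Finset.sum_congr rfl e2]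
        have e3 : d1 (κκ m) = ∑ i ∈ T, κκ m i * v i := by
          rw [hd1, Finsupp.linearCombination_apply, Finsupp.sum]
          rw [Finset.sum_subset (hκsupp m) (fun i _ hi => by
            rw [Finsupp.notMem_support_iff.mp hi, zero_smul])]
          apply Finset.sum_congr rfl
          intro i _
          rw [smul_eq_mul]
        rw [← e3, hκd1 m]
    set x' : FreeAlgebra K G := ∑ m, ZZ m *
      (∑ i ∈ T, WW m i * FreeAlgebra.ι K (Sum.inr (bb i) : G)) with hx'
    have hx'R : x' ∈ Rt := by
      rw [hx']
      exact sum_mem (fun m _ => Rt.mul_mem_left _ _ (hinnerR m))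
    set Y : ib → FreeAlgebra K G := fun i => yy' i - ∑ m, ZZ m * WW m i with hY
    have hYF : ∀ i, Y i ∈ (Fw (w-1) : Submodule K (FreeAlgebra K G)) := by
      intro i
      apply Submodule.sub_mem _ (hyy'F i)
      apply Submodule.sum_mem
      intro m _
      have h := mul_mem_Fw (hZF m) (hWF m i)
      rwa [show w - 1 - dW m + dW m = w - 1 by have := hdW m; omega] at h
    have hYπ : ∀ i, π (Y i) = 0 := by
      intro i
      simp only [hY]
      rw [map_sub, hπyy', map_sum]
      have e4 : ∀ m ∈ (Finset.univ : Finset (Fin N)), π (ZZ m * WW m i) =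
          aa' m * κκ m i := by
        intro m _
        rw [map_mul, hZπ m, hWπ m i]
      rw [Finset.sum_congr rfl e4]
      have e5 : k i = ∑ m, aa' m * κκ m i := by
        rw [hksum, Finsupp.finset_sum_apply]
        apply Finset.sum_congr rfl
        intro m _
        rw [Finsupp.smul_apply, smul_eq_mul]
      rw [e5, sub_self]
    have hYR : ∀ i, Y i ∈ Rt := fun i => ihw (w-1) (by omega) (Y i) (hYF i) (hYπ i)
    have hxfinal : x = r + x' + ∑ i ∈ T, Y i * FreeAlgebra.ι K (Sum.inr (bb i) : G) := by
      rw [← hxeq, hmmT]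
      have e6 : ∀ i ∈ T, yy' i * FreeAlgebra.ι K (Sum.inr (bb i) : G) =
          Y i * FreeAlgebra.ι K (Sum.inr (bb i) : G) +
          ∑ m, ZZ m * WW m i * FreeAlgebra.ι K (Sum.inr (bb i) : G) := by
        intro i _
        simp only [hY]
        rw [sub_mul, Finset.sum_mul]
        exact (sub_add_cancel _ _).symm
      rw [Finset.sum_congr rfl e6, Finset.sum_add_distrib]
      have e7 : ∑ i ∈ T, ∑ m, ZZ m * WW m i * FreeAlgebra.ι K (Sum.inr (bb i) : G) = x' := by
        rw [hx', Finset.sum_comm]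
        apply Finset.sum_congr rfl
        intro m _
        rw [Finset.mul_sum]
        apply Finset.sum_congr rfl
        intro i _
        rw [mul_assoc]
      rw [e7]
      abel
    rw [hxfinal]
    refine Rt.add_mem (Rt.add_mem hr hx'R) ?_
    exact sum_mem (fun i _ => Rt.mul_mem_right _ _ (hYR i))
  -- ## conclusion
  refine ⟨hsurj, ?_⟩
  apply le_antisymm
  · intro x hx
    have hπx : π x = 0 := (TwoSidedIdeal.mem_ker π).mp hx
    have hxtop : x ∈ (⨆ w : ℕ, (Fw w : Submodule K (FreeAlgebra K G))) := by
      rw [iSup_Fw_eq_top]; trivial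
    rw [Submodule.mem_iSup_iff_exists_finsupp] at hxtop
    obtain ⟨f, hf, hfsum⟩ := hxtop
    have hcomp : ∀ w' : ℕ, π (f w') = 0 := by
      intro w'
      have h8 : ∀ w'' : ℕ, gcomp 𝒜 (w':ℤ) (π (f w'')) =
          if w'' = w' then π (f w') else 0 := by
        intro w''
        rcases eq_or_ne w'' w' with rfl | hne
        · rw [if_pos rfl]; exact gcomp_of_mem_same 𝒜 (hπFw (hf w''))
        · rw [if_neg hne]; exact gcomp_of_mem_ne 𝒜 (hπFw (hf w'')) (by exact_mod_cast hne)
      have h9 : gcomp 𝒜 (w':ℤ) (π x) = π (f w') := by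
        rw [← hfsum, Finsupp.sum, map_sum, map_sum]
        rw [Finset.sum_congr rfl (fun w'' _ => h8 w'')]
        rw [Finset.sum_ite_eq' f.support w' (fun _ => π (f w'))]
        split
        · rfl
        · rename_i hns
          rw [Finsupp.notMem_support_iff.mp hns, map_zero]
      rw [← h9, hπx, map_zero]
    rw [← hfsum, Finsupp.sum]
    exact sum_mem (fun w' _ => main w' (f w') (hf w') (hcomp w'))
  · intro x hx
    exact TwoSidedIdeal.mem_span_iff.mp hx (TwoSidedIdeal.ker π)
      (fun z hz => (TwoSidedIdeal.mem_ker π).mpr hz.2)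
end
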